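/- arXiv:2410.14440 — 8 statements merged into one kernel-verified Lean document; each statement's English description precedes it below -/
import Mathlib

section
/- If a Set-functor F preserves 1/4-mono pullbacks, then F admits a normal lax extension. -/
open CategoryTheory

universe u

/-- A relation from `X` to `Y`. -/
abbrev Rel' (X Y : Type u) : Type u := X → Y → Prop

/-- Composite `s ⋅ r` of `r : X ⇸ Y` and `s : Y ⇸ Z`. -/
def relComp {X Y Z : Type u} (s : Rel' Y Z) (r : Rel' X Y) : Rel' X Z :=
  fun x z => ∃ y, r x y ∧ s y z

/-- Converse relation `r°`. -/
def relConv {X Y : Type u} (r : Rel' X Y) : Rel' Y X := fun y x => r x y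

/-- Identity relation `1_X`. -/
def relId (X : Type u) : Rel' X X := fun x y => x = y

/-- The graph relation of a function. -/
def graphRel {X Y : Type u} (f : X → Y) : Rel' X Y := fun x y => f x = y

/-- Pointwise order `r ≤ r'` on relations. -/
def relLe {X Y : Type u} (r r' : Rel' X Y) : Prop := ∀ x y, r x y → r' x y

/-- A relation is total if every `x` is related to some `y`. -/
def relTotal {X Y : Type u} (r : Rel' X Y) : Prop := ∀ x, ∃ y, r x y

/-- A relation is surjective if every `y` is related to some `x`. -/
def relSurj {X Y : Type u} (r : Rel' X Y) : Prop := ∀ y, ∃ x, r x y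

/-- A lax extension of a `Set`-functor `F`. -/
structure LaxExt (F : Type u ⥤ Type u) : Type (u + 1) where
  ext : ∀ {X Y : Type u}, Rel' X Y → Rel' (F.obj X) (F.obj Y)
  mono : ∀ {X Y : Type u} (r r' : Rel' X Y), relLe r r' → relLe (ext r) (ext r')
  lcomp : ∀ {X Y Z : Type u} (r : Rel' X Y) (s : Rel' Y Z),
    relLe (relComp (ext s) (ext r)) (ext (relComp s r))
  mapLe : ∀ {X Y : Type u} (f : X → Y), relLe (graphRel (F.map (TypeCat.ofHom f))) (ext (graphRel f))
  mapConvLe : ∀ {X Y : Type u} (f : X → Y),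
    relLe (relConv (graphRel (F.map (TypeCat.ofHom f)))) (ext (relConv (graphRel f)))

/-- A relax extension of a `Set`-functor `F` (a lax extension without (L2)). -/
structure RelaxExt (F : Type u ⥤ Type u) : Type (u + 1) where
  ext : ∀ {X Y : Type u}, Rel' X Y → Rel' (F.obj X) (F.obj Y)
  mono : ∀ {X Y : Type u} (r r' : Rel' X Y), relLe r r' → relLe (ext r) (ext r')
  mapLe : ∀ {X Y : Type u} (f : X → Y), relLe (graphRel (F.map (TypeCat.ofHom f))) (ext (graphRel f))
  mapConvLe : ∀ {X Y : Type u} (f : X → Y),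
    relLe (relConv (graphRel (F.map (TypeCat.ofHom f)))) (ext (relConv (graphRel f)))

/-- Normality (identity-preservation) of a lax extension. -/
def LaxExt.IsNormal {F : Type u ⥤ Type u} (L : LaxExt F) : Prop :=
  ∀ X : Type u, L.ext (relId X) = relId (F.obj X)

/-- The Barr lifting of a relation along a functor, computed from the canonical span. -/
def BarrLift (F : Type u ⥤ Type u) {X Y : Type u} (r : Rel' X Y) :
    Rel' (F.obj X) (F.obj Y) :=
  fun a b => ∃ t : F.obj {p : X × Y // r p.1 p.2},
    F.map (TypeCat.ofHom (fun p : {p : X × Y // r p.1 p.2} => p.1.1)) t = a ∧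
    F.map (TypeCat.ofHom (fun p : {p : X × Y // r p.1 p.2} => p.1.2)) t = b

/-- A commutative square of functions that is a pullback. -/
def IsPBSquare {P X Y Z : Type u} (p₁ : P → X) (p₂ : P → Y) (f : X → Z) (g : Y → Z) : Prop :=
  (∀ p, f (p₁ p) = g (p₂ p)) ∧ ∀ x y, f x = g y → ∃! p, p₁ p = x ∧ p₂ p = y

/-- A commutative square of functions that is a weak pullback. -/
def IsWeakPBSquare {P X Y Z : Type u} (p₁ : P → X) (p₂ : P → Y) (f : X → Z) (g : Y → Z) : Prop :=
  (∀ p, f (p₁ p) = g (p₂ p)) ∧ ∀ x y, f x = g y → ∃ p, p₁ p = x ∧ p₂ p = y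

/-- `F` preserves 1/4-iso pullbacks. -/
def Preserves14IsoPullbacks (F : Type u ⥤ Type u) : Prop :=
  ∀ (P X Y Z : Type u) (p₁ : P → X) (p₂ : P → Y) (f : X → Z) (g : Y → Z),
    Function.Bijective p₂ → IsPBSquare p₁ p₂ f g →
      IsPBSquare (F.map (TypeCat.ofHom p₁)) (F.map (TypeCat.ofHom p₂)) (F.map (TypeCat.ofHom f)) (F.map (TypeCat.ofHom g))

/-- `F` preserves 1/4-iso 2/4-mono pullbacks. -/
def Preserves14Iso24MonoPullbacks (F : Type u ⥤ Type u) : Prop :=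
  ∀ (P X Y Z : Type u) (p₁ : P → X) (p₂ : P → Y) (f : X → Z) (g : Y → Z),
    Function.Bijective p₂ → Function.Injective p₁ → Function.Injective g →
      IsPBSquare p₁ p₂ f g →
      IsPBSquare (F.map (TypeCat.ofHom p₁)) (F.map (TypeCat.ofHom p₂)) (F.map (TypeCat.ofHom f)) (F.map (TypeCat.ofHom g))

/-- `F` preserves 1/4-mono pullbacks. -/
def Preserves14MonoPullbacks (F : Type u ⥤ Type u) : Prop :=
  ∀ (P X Y Z : Type u) (p₁ : P → X) (p₂ : P → Y) (f : X → Z) (g : Y → Z),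
    Function.Injective p₁ → IsPBSquare p₁ p₂ f g →
      IsPBSquare (F.map (TypeCat.ofHom p₁)) (F.map (TypeCat.ofHom p₂)) (F.map (TypeCat.ofHom f)) (F.map (TypeCat.ofHom g))

/-- `F` preserves inverse images. -/
def PreservesInverseImages (F : Type u ⥤ Type u) : Prop :=
  ∀ (P X Y Z : Type u) (p₁ : P → X) (p₂ : P → Y) (f : X → Z) (g : Y → Z),
    Function.Injective p₁ → Function.Injective g → IsPBSquare p₁ p₂ f g →
      IsPBSquare (F.map (TypeCat.ofHom p₁)) (F.map (TypeCat.ofHom p₂)) (F.map (TypeCat.ofHom f)) (F.map (TypeCat.ofHom g))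

/-- `F` weakly preserves 4/4-epi pullbacks. -/
def WeaklyPreserves44EpiPullbacks (F : Type u ⥤ Type u) : Prop :=
  ∀ (P X Y Z : Type u) (p₁ : P → X) (p₂ : P → Y) (f : X → Z) (g : Y → Z),
    Function.Surjective p₁ → Function.Surjective p₂ →
    Function.Surjective f → Function.Surjective g →
    IsPBSquare p₁ p₂ f g →
      IsWeakPBSquare (F.map (TypeCat.ofHom p₁)) (F.map (TypeCat.ofHom p₂)) (F.map (TypeCat.ofHom f)) (F.map (TypeCat.ofHom g))

/-- A (nonempty) composable sequence of relations from `X` to `Z`. -/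
inductive RelChain : Type u → Type u → Type (u + 1)
  | single : ∀ {X Y : Type u}, Rel' X Y → RelChain X Y
  | cons : ∀ {X Y Z : Type u}, Rel' X Y → RelChain Y Z → RelChain X Z

/-- Composite of a composable sequence of relations (first relation applied first). -/
def RelChain.comp : ∀ {X Z : Type u}, RelChain X Z → Rel' X Z
  | _, _, .single r => r
  | _, _, .cons r c => relComp (RelChain.comp c) r

/-- Composite of the Barr liftings of a composable sequence of relations. -/
def RelChain.barr (F : Type u ⥤ Type u) : ∀ {X Z : Type u}, RelChain X Z → Rel' (F.obj X) (F.obj Z)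
  | _, _, .single r => BarrLift F r
  | _, _, .cons r c => relComp (RelChain.barr F c) (BarrLift F r)

/-- Length (number of relations) of a composable sequence. -/
def RelChain.length : ∀ {X Z : Type u}, RelChain X Z → ℕ
  | _, _, .single _ => 1
  | _, _, .cons _ c => RelChain.length c + 1

/-- All relations in a composable sequence are total and surjective. -/
def RelChain.allTS : ∀ {X Z : Type u}, RelChain X Z → Prop
  | _, _, .single r => relTotal r ∧ relSurj r
  | _, _, .cons r c => (relTotal r ∧ relSurj r) ∧ RelChain.allTS c

/-- All relations in a composable sequence except the last one are total and surjective. -/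
def RelChain.initTS : ∀ {X Z : Type u}, RelChain X Z → Prop
  | _, _, .single _ => True
  | _, _, .cons r c => (relTotal r ∧ relSurj r) ∧ RelChain.initTS c

/-- Composite of the images of a composable sequence of relations under an assignment `R`. -/
def RelChain.lift (F : Type u ⥤ Type u)
    (R : ∀ {X Y : Type u}, Rel' X Y → Rel' (F.obj X) (F.obj Y)) :
    ∀ {X Z : Type u}, RelChain X Z → Rel' (F.obj X) (F.obj Z)
  | _, _, .single r => R r
  | _, _, .cons r c => relComp (RelChain.lift F (fun {_ _} s => R s) c) (R r)

/-- `r ⋅ (r° ⋅ r)ⁿ`. -/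
def dfPow {X Y : Type u} (r : Rel' X Y) : ℕ → Rel' X Y
  | 0 => r
  | n + 1 => relComp (dfPow r n) (relComp (relConv r) r)

/-- The difunctional closure `r̂ = ⋁ₙ r ⋅ (r° ⋅ r)ⁿ` of a relation. -/
def difunClosure {X Y : Type u} (r : Rel' X Y) : Rel' X Y :=
  fun x y => ∃ n : ℕ, dfPow r n x y

section ZigZag

/-- Zigzags of functions between sets. -/
inductive Zig : Type u → Type u → Type (u + 1)
  | nil (X : Type u) : Zig X X
  | fwd {A B C : Type u} (f : A → B) (z : Zig B C) : Zig A C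
  | bwd {A B C : Type u} (g : B → A) (z : Zig B C) : Zig A C

namespace Zig

/-- The relation presented by a zigzag. -/
def rel : ∀ {A C : Type u}, Zig A C → Rel' A C
  | _, _, .nil X => relId X
  | _, _, .fwd f z => fun a c => z.rel (f a) c
  | _, _, .bwd g z => fun a c => ∃ b, g b = a ∧ z.rel b c

/-- Two elements are linked by `F` along a zigzag. -/
def holds (F : Type u ⥤ Type u) : ∀ {A C : Type u}, Zig A C → F.obj A → F.obj C → Prop
  | _, _, .nil _ => fun x y => x = y
  | _, _, .fwd f z => fun x y => holds F z (F.map (TypeCat.ofHom f) x) y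
  | _, _, .bwd g z => fun x y => ∃ x', F.map (TypeCat.ofHom g) x' = x ∧ holds F z x' y

/-- All backwards maps in the zigzag are surjective. -/
def good : ∀ {A C : Type u}, Zig A C → Prop
  | _, _, .nil _ => True
  | _, _, .fwd _ z => good z
  | _, _, .bwd g z => Function.Surjective g ∧ good z

/-- Concatenation of zigzags. -/
def append : ∀ {A B C : Type u}, Zig A B → Zig B C → Zig A C
  | _, _, _, .nil _, w => w
  | _, _, _, .fwd f z, w => .fwd f (z.append w)
  | _, _, _, .bwd g z, w => .bwd g (z.append w)

theorem rel_append : ∀ {A B C : Type u} (z : Zig A B) (w : Zig B C) (a : A) (c : C),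
    (z.append w).rel a c → ∃ b, z.rel a b ∧ w.rel b c
  | _, _, _, .nil _, w, a, c, h => ⟨a, rfl, h⟩
  | _, _, _, .fwd f z, w, a, c, h => by
      obtain ⟨b, hb, hc⟩ := rel_append z w (f a) c h
      exact ⟨b, hb, hc⟩
  | _, _, _, .bwd g z, w, a, c, h => by
      obtain ⟨b0, hb0, h'⟩ := h
      obtain ⟨b, hb, hc⟩ := rel_append z w b0 c h'
      exact ⟨b, ⟨b0, hb0, hb⟩, hc⟩

theorem holds_append (F : Type u ⥤ Type u) :
    ∀ {A B C : Type u} (z : Zig A B) (w : Zig B C) (x : F.obj A) (y : F.obj B) (u : F.obj C),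
      z.holds F x y → w.holds F y u → (z.append w).holds F x u
  | _, _, _, .nil _, w, x, y, u, hx, hy => by
      have hx' : x = y := hx
      subst hx'
      exact hy
  | _, _, _, .fwd f z, w, x, y, u, hx, hy => holds_append F z w _ y u hx hy
  | _, _, _, .bwd g z, w, x, y, u, hx, hy => by
      obtain ⟨x', hx', h'⟩ := hx
      exact ⟨x', hx', holds_append F z w x' y u h' hy⟩

theorem good_total : ∀ {A C : Type u} (z : Zig A C), z.good → ∀ a, ∃ c, z.rel a c
  | _, _, .nil _, _, a => ⟨a, rfl⟩
  | _, _, .fwd f z, hg, a => good_total z hg (f a)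
  | _, _, .bwd g z, hg, a => by
      obtain ⟨b, hb⟩ := hg.1 a
      obtain ⟨c, hc⟩ := good_total z hg.2 b
      exact ⟨c, b, hb, hc⟩

end Zig

theorem map_map (F : Type u ⥤ Type u) {A B C : Type u} (f : A → B) (g : B → C) (x : F.obj A) :
    F.map (TypeCat.ofHom g) (F.map (TypeCat.ofHom f) x) = F.map (TypeCat.ofHom (g ∘ f)) x :=
  (FunctorToTypes.map_comp_apply F (TypeCat.ofHom f) (TypeCat.ofHom g) x).symm

/-- The key consequence of preservation of 1/4-mono pullbacks: elements of `F`
can be pulled back along inverse-image squares. -/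
theorem pb_lift (F : Type u ⥤ Type u) (h : Preserves14MonoPullbacks F)
    {Y Z S : Type u} (q : Y → Z) (m : S → Z) (hm : Function.Injective m)
    (α : F.obj Y) (τ : F.obj S) (hqm : F.map (TypeCat.ofHom q) α = F.map (TypeCat.ofHom m) τ) :
    ∃ δ : F.obj {y : Y // ∃ s, m s = q y},
      F.map (TypeCat.ofHom (Subtype.val : {y : Y // ∃ s, m s = q y} → Y)) δ = α ∧
      F.map (TypeCat.ofHom (fun p : {y : Y // ∃ s, m s = q y} => p.2.choose)) δ = τ := by
  have spec : ∀ p : {y : Y // ∃ s, m s = q y}, m p.2.choose = q p.1 := fun p => p.2.choose_spec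
  have hsq : IsPBSquare (Subtype.val : {y : Y // ∃ s, m s = q y} → Y)
      (fun p : {y : Y // ∃ s, m s = q y} => p.2.choose) q m := by
    constructor
    · intro p; exact (spec p).symm
    · intro y s hys
      have hy : ∃ s', m s' = q y := ⟨s, hys.symm⟩
      refine ⟨⟨y, hy⟩, ⟨rfl, hm ?_⟩, ?_⟩
      · rw [spec ⟨y, hy⟩]
        exact hys
      · rintro p' ⟨h1, h2⟩
        exact Subtype.ext h1
  have hpres := h _ Y S Z Subtype.val (fun p : {y : Y // ∃ s, m s = q y} => p.2.choose) q m
    Subtype.val_injective hsq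
  obtain ⟨δ, ⟨h1, h2⟩, -⟩ := hpres.2 α τ hqm
  exact ⟨δ, h1, h2⟩

/-- Co-reachability trimming: any zigzag linking `a` to `b` can be replaced by a good
zigzag with a smaller relation, starting at a subobject of the original start. -/
theorem cotrim (F : Type u ⥤ Type u) (h : Preserves14MonoPullbacks F) :
    ∀ {Y X : Type u} (z : Zig Y X) (a : F.obj Y) (b : F.obj X), z.holds F a b →
    ∃ (Y' : Type u) (ι : Y' → Y) (zb : Zig Y' X) (a' : F.obj Y'),
      Function.Injective ι ∧ zb.good ∧
      (∀ y' x, zb.rel y' x → z.rel (ι y') x) ∧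
      F.map (TypeCat.ofHom ι) a' = a ∧ zb.holds F a' b := by
  intro Y X z
  induction z with
  | nil X0 =>
      intro a b hz
      refine ⟨X0, id, .nil X0, a, fun _ _ e => e, trivial, fun y x hr => hr, ?_, hz⟩
      exact FunctorToTypes.map_id_apply F a
  | fwd f z ih =>
      intro a b hz
      obtain ⟨Y1, ι1, zb1, a1, hι1, hg1, hcompat1, ha1, hz1⟩ := ih (F.map (TypeCat.ofHom f) a) b hz
      obtain ⟨δ, hδ1, hδ2⟩ := pb_lift F h f ι1 hι1 a a1 ha1.symm
      refine ⟨{y // ∃ s, ι1 s = f y}, Subtype.val,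
        .fwd (fun p : {y // ∃ s, ι1 s = f y} => p.2.choose) zb1, δ,
        Subtype.val_injective, hg1, ?_, hδ1, ?_⟩
      · intro y' x hr
        have hy : ι1 (y'.2.choose) = f y'.1 := y'.2.choose_spec
        show z.rel (f y'.1) x
        rw [← hy]
        exact hcompat1 _ x hr
      · show zb1.holds F (F.map (TypeCat.ofHom (fun p : {y // ∃ s, ι1 s = f y} => p.2.choose)) δ) b
        rw [hδ2]; exact hz1
  | bwd g z ih =>
      intro a b hz
      obtain ⟨a1, hga1, hz'⟩ := hz
      obtain ⟨Y1, ι1, zb1, a1', hι1, hg1, hcompat1, ha1, hz1⟩ := ih a1 b hz'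
      refine ⟨{y // ∃ s, g (ι1 s) = y}, Subtype.val,
        .bwd (fun s => (⟨g (ι1 s), ⟨s, rfl⟩⟩ : {y // ∃ s, g (ι1 s) = y})) zb1,
        F.map (TypeCat.ofHom (fun s => (⟨g (ι1 s), ⟨s, rfl⟩⟩ : {y // ∃ s, g (ι1 s) = y}))) a1',
        Subtype.val_injective, ⟨?_, hg1⟩, ?_, ?_, ⟨a1', rfl, hz1⟩⟩
      · rintro ⟨y, s, hs⟩
        exact ⟨s, Subtype.ext hs⟩
      · rintro y' x ⟨s, hsy, hr⟩
        refine ⟨ι1 s, ?_, hcompat1 s x hr⟩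
        have hv : g (ι1 s) = y'.1 := congrArg Subtype.val hsy
        exact hv
      · rw [map_map F (fun s => (⟨g (ι1 s), ⟨s, rfl⟩⟩ : {y // ∃ s, g (ι1 s) = y}))
          Subtype.val a1']
        show F.map (TypeCat.ofHom (g ∘ ι1)) a1' = a
        rw [← map_map F ι1 g a1', ha1]
        exact hga1

/-- Collapse lemma: along a good zigzag carrying a tagged injective span presentation
compatible with its relation, the `F`-link determines the tagged value. -/
theorem collapse (F : Type u ⥤ Type u) (h : Preserves14MonoPullbacks F) :
    ∀ {Y X : Type u} (z : Zig Y X), z.good →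
    ∀ (S : Type u) (σ : S → X) (ι : S → Y),
      Function.Injective ι →
    ∀ (γ : F.obj S) (a : F.obj Y) (b α : F.obj X),
      F.map (TypeCat.ofHom ι) γ = a → F.map (TypeCat.ofHom σ) γ = α →
      (∀ s x, z.rel (ι s) x → σ s = x) →
      z.holds F a b → α = b := by
  intro Y X z
  induction z with
  | nil X0 =>
      intro hg S σ ι hι γ a b α ha hα hU hz
      have hz' : a = b := hz
      have hσι : σ = ι := funext fun s => hU s (ι s) rfl
      rw [← hz', ← ha, ← hα, hσι]
  | fwd f z ih =>
      intro hg S σ ι hι γ a b α ha hα hU hz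
      have hz' : z.holds F (F.map (TypeCat.ofHom f) a) b := hz
      have huniq : ∀ s s' : S, f (ι s) = f (ι s') → σ s = σ s' := by
        intro s s' he
        obtain ⟨x, hx⟩ := Zig.good_total z hg (f (ι s))
        have h1 : σ s = x := hU s x hx
        have h2 : σ s' = x := hU s' x (by show z.rel (f (ι s')) x; rw [← he]; exact hx)
        rw [h1, h2]
      have hspec : ∀ s' : {y1 // ∃ s, f (ι s) = y1}, f (ι s'.2.choose) = s'.1 :=
        fun s' => s'.2.choose_spec
      refine ih hg {y1 // ∃ s, f (ι s) = y1} (fun s' => σ s'.2.choose) Subtype.val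
        Subtype.val_injective
        (F.map (TypeCat.ofHom (fun s => (⟨f (ι s), ⟨s, rfl⟩⟩ : {y1 // ∃ s, f (ι s) = y1}))) γ)
        (F.map (TypeCat.ofHom f) a) b α ?_ ?_ ?_ hz'
      · rw [map_map F (fun s => (⟨f (ι s), ⟨s, rfl⟩⟩ : {y1 // ∃ s, f (ι s) = y1}))
          Subtype.val γ, ← ha, map_map F ι f γ]
      · rw [map_map F (fun s => (⟨f (ι s), ⟨s, rfl⟩⟩ : {y1 // ∃ s, f (ι s) = y1}))
          (fun s' : {y1 // ∃ s, f (ι s) = y1} => σ s'.2.choose) γ, ← hα]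
        have hcomp : ((fun s' : {y1 // ∃ s, f (ι s) = y1} => σ s'.2.choose) ∘
            (fun s => (⟨f (ι s), ⟨s, rfl⟩⟩ : {y1 // ∃ s, f (ι s) = y1}))) = σ := by
          funext s
          exact huniq _ _ (hspec ⟨f (ι s), ⟨s, rfl⟩⟩)
        rw [hcomp]
      · intro s' x hr
        exact hU s'.2.choose x (by show z.rel (f (ι s'.2.choose)) x; rw [hspec s']; exact hr)
  | bwd g z ih =>
      intro hg S σ ι hι γ a b α ha hα hU hz
      obtain ⟨a1, hga1, hz'⟩ := hz
      obtain ⟨δ, hδ1, hδ2⟩ := pb_lift F h g ι hι a1 γ (by rw [hga1, ha])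
      refine ih hg.2 _ (fun p : {y // ∃ s, ι s = g y} => σ p.2.choose) Subtype.val
        Subtype.val_injective δ a1 b α hδ1 ?_ ?_ hz'
      · rw [← hα, ← hδ2, map_map F (fun p : {y // ∃ s, ι s = g y} => p.2.choose) σ δ]
      · intro s' x hr
        have hspec : ι (s'.2.choose) = g s'.1 := s'.2.choose_spec
        exact hU s'.2.choose x ⟨s'.1, hspec.symm, hr⟩

theorem normal_key (F : Type u ⥤ Type u) (h : Preserves14MonoPullbacks F)
    {X : Type u} (z : Zig X X)
    (hle : ∀ x y, z.rel x y → relId X x y) {a b : F.obj X} (hz : z.holds F a b) : a = b := by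
  obtain ⟨Y', ι, zb, a', hι, hg, hcompat, ha', hzb⟩ := cotrim F h z a b hz
  exact collapse F h zb hg Y' ι id Function.injective_id a' a' b a
    (FunctorToTypes.map_id_apply F a') ha'
    (fun s x hr => hle (ι s) x (hcompat s x hr)) hzb

/-- The smallest lax extension of `F`. -/
noncomputable def zigExt (F : Type u ⥤ Type u) : LaxExt F where
  ext := fun {X Y} r a b => ∃ z : Zig X Y, (∀ x y, z.rel x y → r x y) ∧ z.holds F a b
  mono := by
    intro X Y r r' hrr' a b hab
    obtain ⟨z, hle, hz⟩ := hab
    exact ⟨z, fun x y hxy => hrr' x y (hle x y hxy), hz⟩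
  lcomp := by
    intro X Y Z r s a c hac
    obtain ⟨b, ⟨z1, hle1, hz1⟩, ⟨z2, hle2, hz2⟩⟩ := hac
    refine ⟨z1.append z2, ?_, Zig.holds_append F z1 z2 a b c hz1 hz2⟩
    intro x u hxu
    obtain ⟨y, hy1, hy2⟩ := Zig.rel_append z1 z2 x u hxu
    exact ⟨y, hle1 x y hy1, hle2 y u hy2⟩
  mapLe := by
    intro X Y f a b hab
    exact ⟨.fwd f (.nil Y), fun x y hxy => hxy, hab⟩
  mapConvLe := by
    intro X Y f a b hab
    refine ⟨.bwd f (.nil X), ?_, ⟨b, hab, rfl⟩⟩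
    rintro x y ⟨y', hy', he⟩
    show f y = x
    rw [← he]; exact hy'

end ZigZag

/-- A Set-functor that preserves 1/4-mono pullbacks admits a normal lax extension. -/
theorem stmt1 (F : Type u ⥤ Type u) (h : Preserves14MonoPullbacks F) :
    ∃ L : LaxExt F, L.IsNormal := by
  refine ⟨zigExt F, fun X => ?_⟩
  funext a b
  apply propext
  constructor
  · rintro ⟨z, hle, hz⟩
    exact normal_key F h z hle hz
  · intro hab
    exact ⟨.nil X, fun x y hxy => hxy, hab⟩
end

section
/- If a Set-functor F admits a normal lax extension, then F preserves 1/4-iso pullbacks. -/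
open CategoryTheory

universe u

/-- A Set-functor admitting a normal lax extension preserves 1/4-iso pullbacks. -/
theorem stmt2 (F : Type u ⥤ Type u) (h : ∃ L : LaxExt F, L.IsNormal) :
    Preserves14IsoPullbacks F := by
  obtain ⟨L, hN⟩ := h
  intro P X Y Z p₁ p₂ f g hbij hpb
  obtain ⟨hcomm, hexu⟩ := hpb
  set e := Equiv.ofBijective p₂ hbij with he
  set h' : Y → P := fun y => e.symm y with hh'
  set hf : Y → X := fun y => p₁ (h' y) with hhf
  have hkey : ∀ x y, f x = g y → hf y = x := by
    intro x y hxy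
    obtain ⟨p, ⟨hp1, hp2⟩, -⟩ := hexu x y hxy
    have : h' y = p := by
      rw [← hp2]
      exact e.symm_apply_apply p
    simp [hhf, this, hp1]
  have hp2h' : ∀ y, p₂ (h' y) = y := fun y => e.apply_symm_apply y
  have hh'p2 : ∀ p, h' (p₂ p) = p := fun p => e.symm_apply_apply p
  -- key lifted statement
  have hmain : ∀ a b, F.map (TypeCat.ofHom f) a = F.map (TypeCat.ofHom g) b → F.map (TypeCat.ofHom hf) b = a := by
    intro a b hab
    have s1 : L.ext (graphRel f) a (F.map (TypeCat.ofHom f) a) := L.mapLe f a (F.map (TypeCat.ofHom f) a) rfl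
    have s2 : L.ext (relConv (graphRel g)) (F.map (TypeCat.ofHom f) a) b :=
      L.mapConvLe g (F.map (TypeCat.ofHom f) a) b hab.symm
    have s3 : L.ext (relComp (relConv (graphRel g)) (graphRel f)) a b :=
      L.lcomp (graphRel f) (relConv (graphRel g)) a b ⟨F.map (TypeCat.ofHom f) a, s1, s2⟩
    have s4 : L.ext (relConv (graphRel hf)) a b := by
      refine L.mono _ _ ?_ a b s3
      rintro x y ⟨z, hfx, hgy⟩
      exact hkey x y (hfx.trans hgy.symm)
    have s5 : L.ext (graphRel hf) b (F.map (TypeCat.ofHom hf) b) := L.mapLe hf b (F.map (TypeCat.ofHom hf) b) rfl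
    have s6 : L.ext (relComp (graphRel hf) (relConv (graphRel hf))) a (F.map (TypeCat.ofHom hf) b) :=
      L.lcomp (relConv (graphRel hf)) (graphRel hf) a (F.map (TypeCat.ofHom hf) b) ⟨b, s4, s5⟩
    have s7 : L.ext (relId X) a (F.map (TypeCat.ofHom hf) b) := by
      refine L.mono _ _ ?_ a (F.map (TypeCat.ofHom hf) b) s6
      rintro x x' ⟨y, hy, hy'⟩
      exact hy.symm.trans hy'
    have := hN X ▸ s7
    exact this.symm
  constructor
  · intro t
    have : F.map (TypeCat.ofHom f) (F.map (TypeCat.ofHom p₁) t) = F.map (TypeCat.ofHom p₁ ≫ TypeCat.ofHom f) t := (FunctorToTypes.map_comp_apply F (TypeCat.ofHom p₁) (TypeCat.ofHom f) t).symm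
    rw [this]
    have : F.map (TypeCat.ofHom g) (F.map (TypeCat.ofHom p₂) t) = F.map (TypeCat.ofHom p₂ ≫ TypeCat.ofHom g) t := (FunctorToTypes.map_comp_apply F (TypeCat.ofHom p₂) (TypeCat.ofHom g) t).symm
    rw [this]
    have : (TypeCat.ofHom p₁ ≫ TypeCat.ofHom f : P ⟶ Z) = (TypeCat.ofHom p₂ ≫ TypeCat.ofHom g) := by ext p; exact hcomm p
    rw [this]
  · intro a b hab
    refine ⟨F.map (TypeCat.ofHom h') b, ⟨?_, ?_⟩, ?_⟩
    · have : F.map (TypeCat.ofHom p₁) (F.map (TypeCat.ofHom h') b) = F.map (TypeCat.ofHom h' ≫ TypeCat.ofHom p₁) b :=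
        (FunctorToTypes.map_comp_apply F (TypeCat.ofHom h') (TypeCat.ofHom p₁) b).symm
      rw [this]
      have heq : (TypeCat.ofHom h' ≫ TypeCat.ofHom p₁ : Y ⟶ X) = TypeCat.ofHom hf := by ext y; rfl
      rw [heq]
      exact hmain a b hab
    · have : F.map (TypeCat.ofHom p₂) (F.map (TypeCat.ofHom h') b) = F.map (TypeCat.ofHom h' ≫ TypeCat.ofHom p₂) b :=
        (FunctorToTypes.map_comp_apply F (TypeCat.ofHom h') (TypeCat.ofHom p₂) b).symm
      rw [this]
      have heq : (TypeCat.ofHom h' ≫ TypeCat.ofHom p₂ : Y ⟶ Y) = 𝟙 Y := by ext y; exact hp2h' y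
      rw [heq, FunctorToTypes.map_id_apply]
    · rintro t ⟨ht1, ht2⟩
      have : F.map (TypeCat.ofHom h') (F.map (TypeCat.ofHom p₂) t) = F.map (TypeCat.ofHom p₂ ≫ TypeCat.ofHom h') t :=
        (FunctorToTypes.map_comp_apply F (TypeCat.ofHom p₂) (TypeCat.ofHom h') t).symm
      rw [← ht2, this]
      have heq : (TypeCat.ofHom p₂ ≫ TypeCat.ofHom h' : P ⟶ P) = 𝟙 P := by ext p; exact hh'p2 p
      rw [heq, FunctorToTypes.map_id_apply]
end

section
/- For a Set-functor F, the following are equivalent: (i) F preserves 1/4-iso 2/4-mono pullbacks; (ii) F is well-defined on difunctional relations; (iii) F is monotone on difunctional relations; (iv) F preserves 1/4-iso pullbacks. -/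
open CategoryTheory

universe u

/-- `F` is well-defined on difunctional relations. -/
def WellDefinedOnDifunctional (F : Type u ⥤ Type u) : Prop :=
  ∀ (X Y A A' : Type u) (f : X → A) (g : Y → A) (f' : X → A') (g' : Y → A'),
    relComp (relConv (graphRel g)) (graphRel f) =
      relComp (relConv (graphRel g')) (graphRel f') →
    relComp (relConv (graphRel (F.map (TypeCat.ofHom g)))) (graphRel (F.map (TypeCat.ofHom f))) =
      relComp (relConv (graphRel (F.map (TypeCat.ofHom g')))) (graphRel (F.map (TypeCat.ofHom f')))

/-- `F` is monotone on difunctional relations. -/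
def MonotoneOnDifunctional (F : Type u ⥤ Type u) : Prop :=
  ∀ (X Y A A' : Type u) (f : X → A) (g : Y → A) (f' : X → A') (g' : Y → A'),
    relLe (relComp (relConv (graphRel g)) (graphRel f))
      (relComp (relConv (graphRel g')) (graphRel f')) →
    relLe (relComp (relConv (graphRel (F.map (TypeCat.ofHom g)))) (graphRel (F.map (TypeCat.ofHom f))))
      (relComp (relConv (graphRel (F.map (TypeCat.ofHom g')))) (graphRel (F.map (TypeCat.ofHom f'))))

section AuxProof

variable (F : Type u ⥤ Type u)

private lemma mapc {X Y Z : Type u} (f : X → Y) (g : Y → Z) (x : F.obj X) :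
    F.map (TypeCat.ofHom (g ∘ f)) x = F.map (TypeCat.ofHom g) (F.map (TypeCat.ofHom f) x) :=
  FunctorToTypes.map_comp_apply F (TypeCat.ofHom f) (TypeCat.ofHom g) x

private lemma mapi {X : Type u} (x : F.obj X) : F.map (TypeCat.ofHom (id : X → X)) x = x := by
  have h : TypeCat.ofHom (id : X → X) = 𝟙 X := rfl
  rw [h, F.map_id]; rfl

/-- The intersection of the ranges of `u` and `v`, as a subtype of `B`. -/
private abbrev Cty {X Y B : Type u} (u : X → B) (v : Y → B) : Type u :=
  {bb : B // (∃ x, u x = bb) ∧ (∃ y, v y = bb)}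

open Classical in
private noncomputable def rmap {X B A : Type u} (u : X → B) (π : B → A) (w₀ : A) : A → A :=
  fun aa => if ∃ x, π (u x) = aa then aa else w₀

open Classical in
private noncomputable def emap {X Y B A : Type u} (u : X → B) (v : Y → B) (π : B → A)
    (H : ∀ x y, π (u x) = π (v y) → u x = v y) (x₀ : X) (y₀ : Y) (hc : u x₀ = v y₀) :
    A → Cty u v :=
  fun aa =>
    if hh : (∃ x, π (u x) = aa) ∧ (∃ y, π (v y) = aa) then
      ⟨u hh.1.choose, ⟨hh.1.choose, rfl⟩,
        hh.2.choose, (H _ _ (hh.1.choose_spec.trans hh.2.choose_spec.symm)).symm⟩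
    else ⟨u x₀, ⟨x₀, rfl⟩, y₀, hc.symm⟩

private lemma emap_spec {X Y B A : Type u} (u : X → B) (v : Y → B) (π : B → A)
    (H : ∀ x y, π (u x) = π (v y) → u x = v y) (x₀ : X) (y₀ : Y) (hc : u x₀ = v y₀) :
    (fun c : Cty u v => π c.1) ∘ emap u v π H x₀ y₀ hc =
      rmap v π (π (u x₀)) ∘ rmap u π (π (u x₀)) := by
  classical
  funext aa
  show π (emap u v π H x₀ y₀ hc aa).1 = rmap v π (π (u x₀)) (rmap u π (π (u x₀)) aa)
  unfold emap rmap
  by_cases hU : ∃ x, π (u x) = aa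
  · by_cases hV : ∃ y, π (v y) = aa
    · rw [dif_pos (And.intro hU hV), if_pos hU, if_pos hV]
      exact hU.choose_spec
    · rw [dif_neg (fun hh => hV hh.2), if_pos hU, if_neg hV]
  · have hV0 : ∃ y, π (v y) = π (u x₀) := ⟨y₀, congrArg π hc.symm⟩
    rw [dif_neg (fun hh => hU hh.1), if_neg hU, if_pos hV0]

/-- Core lemma: the nonempty-intersection case. -/
private lemma core (hp : Preserves14Iso24MonoPullbacks F) {X Y B A : Type u}
    (u : X → B) (v : Y → B) (π : B → A)
    (H : ∀ x y, π (u x) = π (v y) → u x = v y)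
    (x₀ : X) (y₀ : Y) (hc : u x₀ = v y₀)
    (a : F.obj X) (b : F.obj Y)
    (hab : F.map (TypeCat.ofHom (π ∘ u)) a = F.map (TypeCat.ofHom (π ∘ v)) b) :
    F.map (TypeCat.ofHom u) a = F.map (TypeCat.ofHom v) b := by
  classical
  let W := {bb : B // (∃ x, u x = bb) ∨ (∃ y, v y = bb)}
  let C := Cty u v
  let h : C → W := fun c => ⟨c.1, Or.inl c.2.1⟩
  let πW : W → A := fun w => π w.1
  let πC : C → A := fun c => π c.1
  have hπC : Function.Injective πC := by
    rintro ⟨c, ⟨x, hx⟩, ⟨y, hy⟩⟩ ⟨c', ⟨x', hx'⟩, ⟨y', hy'⟩⟩ hcc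
    apply Subtype.ext
    have e1 : π (u x) = π (v y') := by rw [hx, hy']; exact hcc
    have e2 := H x y' e1
    show c = c'
    rw [← hx, e2, hy']
  have hinj : Function.Injective h := by
    intro c c' e
    apply Subtype.ext
    have := congrArg (fun w : W => w.1) e
    exact this
  have hsq : IsPBSquare h (id : C → C) πW πC := by
    constructor
    · intro p; rfl
    · rintro ⟨w, hw⟩ c hwc
      refine ⟨c, ⟨?_, rfl⟩, ?_⟩
      · apply Subtype.ext
        obtain ⟨⟨x', hx'⟩, ⟨y', hy'⟩⟩ := c.2
        rcases hw with ⟨x, hx⟩ | ⟨y, hy⟩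
        · have e1 : π (u x) = π (v y') := by rw [hx, hy']; exact hwc
          have e2 := H x y' e1
          show c.1 = w
          rw [← hx, e2, hy']
        · have e1 : π (u x') = π (v y) := by rw [hx', hy]; exact hwc.symm
          have e2 := H x' y e1
          show c.1 = w
          rw [← hy, ← e2, hx']
      · rintro p ⟨-, rfl⟩; rfl
  have hPB := hp C W C A h id πW πC Function.bijective_id hinj hπC hsq
  have key : ∀ (γ : F.obj W) (δ : F.obj C), F.map (TypeCat.ofHom πW) γ = F.map (TypeCat.ofHom πC) δ → γ = F.map (TypeCat.ofHom h) δ := by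
    intro γ δ he
    obtain ⟨t, ⟨ht1, ht2⟩, -⟩ := hPB.2 γ δ he
    rw [mapi F t] at ht2
    rw [← ht1, ht2]
  let ζ : F.obj A := F.map (TypeCat.ofHom (π ∘ u)) a
  let r : A → A := rmap u π (π (u x₀))
  let s : A → A := rmap v π (π (u x₀))
  have hru : r ∘ (π ∘ u) = π ∘ u := by
    funext x
    show rmap u π (π (u x₀)) (π (u x)) = π (u x)
    unfold rmap
    rw [if_pos ⟨x, rfl⟩]
  have hsv : s ∘ (π ∘ v) = π ∘ v := by
    funext y
    show rmap v π (π (u x₀)) (π (v y)) = π (v y)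
    unfold rmap
    rw [if_pos ⟨y, rfl⟩]
  have hrζ : F.map (TypeCat.ofHom r) ζ = ζ := by
    show F.map (TypeCat.ofHom r) (F.map (TypeCat.ofHom (π ∘ u)) a) = F.map (TypeCat.ofHom (π ∘ u)) a
    rw [← mapc F (π ∘ u) r, hru]
  have hsζ : F.map (TypeCat.ofHom s) ζ = ζ := by
    show F.map (TypeCat.ofHom s) (F.map (TypeCat.ofHom (π ∘ u)) a) = F.map (TypeCat.ofHom (π ∘ u)) a
    rw [hab, ← mapc F (π ∘ v) s, hsv]
  let e₀ : A → C := emap u v π H x₀ y₀ hc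
  have he : πC ∘ e₀ = s ∘ r := emap_spec u v π H x₀ y₀ hc
  let δ : F.obj C := F.map (TypeCat.ofHom e₀) ζ
  have hδ : F.map (TypeCat.ofHom πC) δ = ζ := by
    show F.map (TypeCat.ofHom πC) (F.map (TypeCat.ofHom e₀) ζ) = ζ
    rw [← mapc F e₀ πC, he, mapc F r s, hrζ, hsζ]
  let u' : X → W := fun x => ⟨u x, Or.inl ⟨x, rfl⟩⟩
  let v' : Y → W := fun y => ⟨v y, Or.inr ⟨y, rfl⟩⟩
  have h1 : F.map (TypeCat.ofHom πW) (F.map (TypeCat.ofHom u') a) = F.map (TypeCat.ofHom πC) δ := by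
    rw [hδ, ← mapc F u' πW]
  have h2 : F.map (TypeCat.ofHom πW) (F.map (TypeCat.ofHom v') b) = F.map (TypeCat.ofHom πC) δ := by
    rw [hδ, ← mapc F v' πW]
    show F.map (TypeCat.ofHom (π ∘ v)) b = F.map (TypeCat.ofHom (π ∘ u)) a
    exact hab.symm
  have hαβ : F.map (TypeCat.ofHom u') a = F.map (TypeCat.ofHom v') b := (key _ _ h1).trans (key _ _ h2).symm
  calc F.map (TypeCat.ofHom u) a = F.map (TypeCat.ofHom (Subtype.val ∘ u')) a := rfl
    _ = F.map (TypeCat.ofHom Subtype.val) (F.map (TypeCat.ofHom u') a) := mapc F u' Subtype.val a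
    _ = F.map (TypeCat.ofHom Subtype.val) (F.map (TypeCat.ofHom v') b) := by rw [hαβ]
    _ = F.map (TypeCat.ofHom (Subtype.val ∘ v')) b := (mapc F v' Subtype.val b).symm
    _ = F.map (TypeCat.ofHom v) b := rfl

/-- Lemma A: cross-injective cospan comparison, all cases. -/
private lemma lemA (hp : Preserves14Iso24MonoPullbacks F) {X Y B A : Type u}
    (u : X → B) (v : Y → B) (π : B → A)
    (H : ∀ x y, π (u x) = π (v y) → u x = v y)
    (a : F.obj X) (b : F.obj Y)
    (hab : F.map (TypeCat.ofHom (π ∘ u)) a = F.map (TypeCat.ofHom (π ∘ v)) b) :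
    F.map (TypeCat.ofHom u) a = F.map (TypeCat.ofHom v) b := by
  classical
  by_cases hX : Nonempty X
  · by_cases hY : Nonempty Y
    · by_cases hC : ∃ x y, u x = v y
      · obtain ⟨x₀, y₀, hc⟩ := hC
        exact core F hp u v π H x₀ y₀ hc a b hab
      · obtain ⟨x₀⟩ := hX
        let u' : X ⊕ PUnit.{u+1} → B ⊕ PUnit.{u+1} :=
          fun x => match x with | .inl x => .inl (u x) | .inr _ => .inr PUnit.unit
        let v' : Y ⊕ PUnit.{u+1} → B ⊕ PUnit.{u+1} :=
          fun y => match y with | .inl y => .inl (v y) | .inr _ => .inr PUnit.unit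
        let π' : B ⊕ PUnit.{u+1} → A ⊕ PUnit.{u+1} :=
          fun bb => match bb with | .inl bb => .inl (π bb) | .inr _ => .inr PUnit.unit
        have H' : ∀ x y, π' (u' x) = π' (v' y) → u' x = v' y := by
          rintro (x | x) (y | y) hxy
          · have hxy' : Sum.inl (π (u x)) = Sum.inl (π (v y)) := hxy
            exact congrArg Sum.inl (H x y (Sum.inl.inj hxy'))
          · exact absurd (hxy : Sum.inl (π (u x)) = Sum.inr PUnit.unit) (by simp)
          · exact absurd (hxy : Sum.inr PUnit.unit = Sum.inl (π (v y))) (by simp)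
          · rfl
        have hab2 : F.map (TypeCat.ofHom (π' ∘ u')) (F.map (TypeCat.ofHom Sum.inl) a) = F.map (TypeCat.ofHom (π' ∘ v')) (F.map (TypeCat.ofHom Sum.inl) b) := by
          rw [← mapc F Sum.inl (π' ∘ u'), ← mapc F Sum.inl (π' ∘ v')]
          show F.map (TypeCat.ofHom (Sum.inl ∘ (π ∘ u))) a = F.map (TypeCat.ofHom (Sum.inl ∘ (π ∘ v))) b
          rw [mapc F (π ∘ u) Sum.inl, mapc F (π ∘ v) Sum.inl, hab]
        have hcore := core F hp u' v' π' H' (Sum.inr PUnit.unit) (Sum.inr PUnit.unit) rfl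
          (F.map (TypeCat.ofHom Sum.inl) a) (F.map (TypeCat.ofHom Sum.inl) b) hab2
        have h3 : F.map (TypeCat.ofHom (Sum.inl : B → B ⊕ PUnit.{u+1})) (F.map (TypeCat.ofHom u) a) =
            F.map (TypeCat.ofHom (Sum.inl : B → B ⊕ PUnit.{u+1})) (F.map (TypeCat.ofHom v) b) := by
          rw [← mapc F u Sum.inl, ← mapc F v Sum.inl]
          show F.map (TypeCat.ofHom (u' ∘ Sum.inl)) a = F.map (TypeCat.ofHom (v' ∘ Sum.inl)) b
          rw [mapc F Sum.inl u', mapc F Sum.inl v', hcore]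
        let ret : B ⊕ PUnit.{u+1} → B := fun bb => Sum.elim id (fun _ => u x₀) bb
        have h4 : ∀ z : F.obj B, F.map (TypeCat.ofHom ret) (F.map (TypeCat.ofHom Sum.inl) z) = z := by
          intro z
          rw [← mapc F Sum.inl ret]
          show F.map (TypeCat.ofHom (id : B → B)) z = z
          exact mapi F z
        calc F.map (TypeCat.ofHom u) a = F.map (TypeCat.ofHom ret) (F.map (TypeCat.ofHom Sum.inl) (F.map (TypeCat.ofHom u) a)) := (h4 _).symm
          _ = F.map (TypeCat.ofHom ret) (F.map (TypeCat.ofHom Sum.inl) (F.map (TypeCat.ofHom v) b)) := by rw [h3]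
          _ = F.map (TypeCat.ofHom v) b := h4 _
    · have hY' : IsEmpty Y := not_nonempty_iff.mp hY
      have hsq : IsPBSquare v (id : Y → Y) π (π ∘ v) :=
        ⟨fun p => rfl, fun x y => hY'.elim y⟩
      have hPB := hp Y B Y A v id π (π ∘ v) Function.bijective_id
        (fun y => hY'.elim y) (fun y => hY'.elim y) hsq
      have hyp : F.map (TypeCat.ofHom π) (F.map (TypeCat.ofHom u) a) = F.map (TypeCat.ofHom (π ∘ v)) b := by
        rw [← mapc F u π]; exact hab
      obtain ⟨t, ⟨ht1, ht2⟩, -⟩ := hPB.2 (F.map (TypeCat.ofHom u) a) b hyp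
      rw [mapi F t] at ht2
      rw [ht2] at ht1
      exact ht1.symm
  · have hX' : IsEmpty X := not_nonempty_iff.mp hX
    have hsq : IsPBSquare u (id : X → X) π (π ∘ u) :=
      ⟨fun p => rfl, fun x y => hX'.elim y⟩
    have hPB := hp X B X A u id π (π ∘ u) Function.bijective_id
      (fun x => hX'.elim x) (fun x => hX'.elim x) hsq
    have hyp : F.map (TypeCat.ofHom π) (F.map (TypeCat.ofHom v) b) = F.map (TypeCat.ofHom (π ∘ u)) a := by
      rw [← mapc F v π]; exact hab.symm
    obtain ⟨t, ⟨ht1, ht2⟩, -⟩ := hPB.2 (F.map (TypeCat.ofHom v) b) a hyp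
    rw [mapi F t] at ht2
    rw [ht2] at ht1
    exact ht1

private lemma mono_of_pres (hp : Preserves14Iso24MonoPullbacks F) :
    MonotoneOnDifunctional F := by
  intro X Y A A' f g f' g' hle
  have hle' : ∀ x y, f x = g y → f' x = g' y := by
    intro x y hxy
    have harg : ∃ c, f x = c ∧ g y = c := ⟨f x, rfl, hxy.symm⟩
    have hres : ∃ c, f' x = c ∧ g' y = c := hle x y harg
    obtain ⟨c, h1, h2⟩ := hres
    exact h1.trans h2.symm
  intro α β hcomp
  have hcomp' : ∃ c, F.map (TypeCat.ofHom f) α = c ∧ F.map (TypeCat.ofHom g) β = c := hcomp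
  obtain ⟨c, hc1, hc2⟩ := hcomp'
  have hfg : F.map (TypeCat.ofHom f) α = F.map (TypeCat.ofHom g) β := hc1.trans hc2.symm
  have H : ∀ x y, Prod.fst ((fun x => (f x, f' x)) x) = Prod.fst ((fun y => (g y, g' y)) y) →
      (fun x => (f x, f' x)) x = (fun y => (g y, g' y)) y :=
    fun x y hxy => Prod.ext hxy (hle' x y hxy)
  have hab : F.map (TypeCat.ofHom (Prod.fst ∘ (fun x => (f x, f' x)))) α =
      F.map (TypeCat.ofHom (Prod.fst ∘ (fun y => (g y, g' y)))) β := hfg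
  have hkey := lemA F hp (fun x => (f x, f' x)) (fun y => (g y, g' y)) Prod.fst H α β hab
  have hsnd : F.map (TypeCat.ofHom (Prod.snd ∘ (fun x => (f x, f' x)))) α =
      F.map (TypeCat.ofHom (Prod.snd ∘ (fun y => (g y, g' y)))) β := by
    rw [mapc F (fun x => (f x, f' x)) Prod.snd, mapc F (fun y => (g y, g' y)) Prod.snd, hkey]
  show ∃ c, F.map (TypeCat.ofHom f') α = c ∧ F.map (TypeCat.ofHom g') β = c
  exact ⟨F.map (TypeCat.ofHom f') α, rfl, hsnd.symm⟩

private lemma wd_of_mono (hm : MonotoneOnDifunctional F) :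
    WellDefinedOnDifunctional F := by
  intro X Y A A' f g f' g' heq
  have h1 := hm X Y A A' f g f' g' (by rw [heq]; exact fun _ _ h => h)
  have h2 := hm X Y A' A f' g' f g (by rw [← heq]; exact fun _ _ h => h)
  funext α β
  exact propext ⟨h1 α β, h2 α β⟩

private lemma mono_of_wd (hw : WellDefinedOnDifunctional F) :
    MonotoneOnDifunctional F := by
  intro X Y A A' f g f' g' hle
  have hle' : ∀ x y, f x = g y → f' x = g' y := by
    intro x y hxy
    have harg : ∃ c, f x = c ∧ g y = c := ⟨f x, rfl, hxy.symm⟩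
    have hres : ∃ c, f' x = c ∧ g' y = c := hle x y harg
    obtain ⟨c, h1, h2⟩ := hres
    exact h1.trans h2.symm
  have heq : relComp (relConv (graphRel g)) (graphRel f) =
      relComp (relConv (graphRel (fun y => (g y, g' y)))) (graphRel (fun x => (f x, f' x))) := by
    funext x y
    apply propext
    constructor
    · rintro ⟨c, h1, h2⟩
      have hxy : f x = g y := h1.trans h2.symm
      exact ⟨(f x, f' x), rfl, (Prod.ext hxy (hle' x y hxy)).symm⟩
    · rintro ⟨c, h1, h2⟩
      have hxy : (f x, f' x) = (g y, g' y) := h1.trans h2.symm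
      exact ⟨f x, rfl, (congrArg Prod.fst hxy).symm⟩
  have hkey := hw X Y A (A × A') f g (fun x => (f x, f' x)) (fun y => (g y, g' y)) heq
  intro α β hcomp
  have hcomp2 : relComp (relConv (graphRel (F.map (TypeCat.ofHom (fun y => (g y, g' y))))))
      (graphRel (F.map (TypeCat.ofHom (fun x => (f x, f' x))))) α β := by
    rw [← hkey]; exact hcomp
  have hcomp2' : ∃ c, F.map (TypeCat.ofHom (fun x => (f x, f' x))) α = c ∧
      F.map (TypeCat.ofHom (fun y => (g y, g' y))) β = c := hcomp2
  obtain ⟨c, hc1, hc2⟩ := hcomp2'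
  have hfg : F.map (TypeCat.ofHom (fun x => (f x, f' x))) α = F.map (TypeCat.ofHom (fun y => (g y, g' y))) β :=
    hc1.trans hc2.symm
  have hsnd : F.map (TypeCat.ofHom (Prod.snd ∘ (fun x => (f x, f' x)))) α =
      F.map (TypeCat.ofHom (Prod.snd ∘ (fun y => (g y, g' y)))) β := by
    rw [mapc F (fun x => (f x, f' x)) Prod.snd, mapc F (fun y => (g y, g' y)) Prod.snd, hfg]
  show ∃ c, F.map (TypeCat.ofHom f') α = c ∧ F.map (TypeCat.ofHom g') β = c
  exact ⟨F.map (TypeCat.ofHom f') α, rfl, hsnd.symm⟩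

private lemma pres14_of_mono (hm : MonotoneOnDifunctional F) :
    Preserves14IsoPullbacks F := by
  intro P X Y Z p₁ p₂ f g hbij hsq
  obtain ⟨hcomm, hpb⟩ := hsq
  let E := Equiv.ofBijective p₂ hbij
  let e : Y → P := fun y => E.symm y
  have hep : ∀ y, p₂ (e y) = y := fun y => E.apply_symm_apply y
  have hpe : ∀ p, e (p₂ p) = p := fun p => E.symm_apply_apply p
  have hh : ∀ x y, f x = g y → p₁ (e y) = x := by
    intro x y hxy
    obtain ⟨p, ⟨hp1, hp2⟩, -⟩ := hpb x y hxy
    rw [← hp2, ← hp1, hpe]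
  have hle : relLe (relComp (relConv (graphRel g)) (graphRel f))
      (relComp (relConv (graphRel (fun y => p₁ (e y)))) (graphRel (id : X → X))) := by
    intro x y hxy
    have hxy' : ∃ c, f x = c ∧ g y = c := hxy
    obtain ⟨c, h1, h2⟩ := hxy'
    have hfg : f x = g y := h1.trans h2.symm
    show ∃ c, id x = c ∧ p₁ (e y) = c
    exact ⟨x, rfl, hh x y hfg⟩
  have hkey := hm X Y Z X f g id (fun y => p₁ (e y)) hle
  constructor
  · intro t
    rw [← mapc F p₁ f, ← mapc F p₂ g]
    have hce : f ∘ p₁ = g ∘ p₂ := funext hcomm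
    rw [hce]
  · intro α β hαβ
    have harg : ∃ c, F.map (TypeCat.ofHom f) α = c ∧ F.map (TypeCat.ofHom g) β = c := ⟨F.map (TypeCat.ofHom f) α, rfl, hαβ.symm⟩
    have hres : ∃ c, F.map (TypeCat.ofHom (id : X → X)) α = c ∧ F.map (TypeCat.ofHom (fun y => p₁ (e y))) β = c :=
      hkey α β harg
    obtain ⟨c, h1, h2⟩ := hres
    rw [mapi F α] at h1
    have hβα : F.map (TypeCat.ofHom (fun y => p₁ (e y))) β = α := h2.trans h1.symm
    refine ⟨F.map (TypeCat.ofHom e) β, ⟨?_, ?_⟩, ?_⟩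
    · rw [← mapc F e p₁]
      exact hβα
    · rw [← mapc F e p₂]
      have hid : p₂ ∘ e = id := funext hep
      rw [hid]
      exact mapi F β
    · rintro t ⟨ht1, ht2⟩
      rw [← ht2, ← mapc F p₂ e]
      have hid : e ∘ p₂ = id := funext hpe
      rw [hid, mapi F t]

end AuxProof

/-- The four conditions of Theorem `p:64` are equivalent. -/
theorem stmt3 (F : Type u ⥤ Type u) :
    (Preserves14Iso24MonoPullbacks F ↔ WellDefinedOnDifunctional F) ∧
    (WellDefinedOnDifunctional F ↔ MonotoneOnDifunctional F) ∧
    (MonotoneOnDifunctional F ↔ Preserves14IsoPullbacks F) := by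
  refine ⟨⟨fun h => wd_of_mono F (mono_of_pres F h),
      fun h => fun P X Y Z p₁ p₂ f g hb _ _ hsq =>
        pres14_of_mono F (mono_of_wd F h) P X Y Z p₁ p₂ f g hb hsq⟩,
    ⟨mono_of_wd F, wd_of_mono F⟩,
    ⟨pres14_of_mono F, fun h => mono_of_pres F
      (fun P X Y Z p₁ p₂ f g hb _ _ hsq => h P X Y Z p₁ p₂ f g hb hsq)⟩⟩
end

section
/- Let M be a commutative monoid. The monoid-valued functor M^(−) on sets — sending a set X to the set X →₀ M of finitely supported functions X → M, and a function f : X → Y to the map μ ↦ (y ↦ Σ_{x ∈ f⁻¹(y)} μ(x)) (i.e. Finsupp.mapDomain f) — admits a normal lax extension if and only if M is positive, i.e. for all a, b ∈ M, a + b = 0 implies a = 0. -/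
open CategoryTheory

universe u

/-- The monoid-valued functor `M^(−)` sending `X` to `X →₀ M`. -/
noncomputable def finsuppFunctor (M : Type u) [AddCommMonoid M] : Type u ⥤ Type u where
  obj X := X →₀ M
  map f := TypeCat.ofHom (Finsupp.mapDomain f)
  map_id X := by
    ext μ a
    exact DFunLike.congr_fun (Finsupp.mapDomain_id (v := μ)) a
  map_comp f g := by
    ext μ a
    exact DFunLike.congr_fun (Finsupp.mapDomain_comp (v := μ) (f := ⇑f) (g := ⇑g)) a

section aux
variable {M : Type u} [AddCommMonoid M]

theorem pos_sum (hpos : ∀ a b : M, a + b = 0 → a = 0) {α : Type*} (s : Finset α)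
    (g : α → M) (h : ∑ i ∈ s, g i = 0) : ∀ i ∈ s, g i = 0 := by
  classical
  induction s using Finset.induction_on with
  | empty => simp
  | insert a s hnot ih =>
    rw [Finset.sum_insert hnot] at h
    intro i hi
    rcases Finset.mem_insert.mp hi with rfl | hi
    · exact hpos _ _ h
    · exact ih (hpos _ _ (by rwa [add_comm] at h)) i hi

open scoped Classical in
theorem mapDomain_apply_eq_sum {X Y : Type u} (f : X → Y) (μ : X →₀ M) (y : Y) :
    Finsupp.mapDomain f μ y = ∑ x ∈ μ.support, if f x = y then μ x else 0 := by
  classical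
  rw [Finsupp.mapDomain, Finsupp.sum_apply]
  simp [Finsupp.sum, Finsupp.single_apply]

theorem mem_support_mapDomain (hpos : ∀ a b : M, a + b = 0 → a = 0)
    {X Y : Type u} (f : X → Y) (μ : X →₀ M) {x : X} (hx : x ∈ μ.support) :
    f x ∈ (Finsupp.mapDomain f μ).support := by
  classical
  rw [Finsupp.mem_support_iff]
  intro h0
  rw [mapDomain_apply_eq_sum] at h0
  have := pos_sum hpos _ _ h0 x hx
  simp at this
  exact Finsupp.mem_support_iff.mp hx this

/-- The candidate normal lax extension of `M^(−)`: Egli–Milner on supports plus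
matching sums over all "closed" pairs of subsets of the supports. -/
def LrelExt (M : Type u) [AddCommMonoid M] {X Y : Type u} (r : Rel' X Y)
    (μ : X →₀ M) (ν : Y →₀ M) : Prop :=
  (∀ x ∈ μ.support, ∃ y ∈ ν.support, r x y) ∧
  (∀ y ∈ ν.support, ∃ x ∈ μ.support, r x y) ∧
  ∀ U : Finset X, ∀ V : Finset Y, U ⊆ μ.support → V ⊆ ν.support →
    (∀ x ∈ U, ∀ y ∈ ν.support, r x y → y ∈ V) →
    (∀ y ∈ V, ∀ x ∈ μ.support, r x y → x ∈ U) →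
    ∑ x ∈ U, μ x = ∑ y ∈ V, ν y

theorem LrelExt_conv {X Y : Type u} (r : Rel' X Y) (μ : X →₀ M) (ν : Y →₀ M) :
    LrelExt M (relConv r) ν μ ↔ LrelExt M r μ ν := by
  constructor
  · rintro ⟨h1, h2, h3⟩
    exact ⟨h2, h1, fun U V hU hV c1 c2 =>
      (h3 V U hV hU (fun y hy x hx hr => c2 y hy x hx hr)
        (fun x hx y hy hr => c1 x hx y hy hr)).symm⟩
  · rintro ⟨h1, h2, h3⟩
    exact ⟨h2, h1, fun V U hV hU c1 c2 =>
      (h3 U V hU hV (fun x hx y hy hr => c2 x hx y hy hr)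
        (fun y hy x hx hr => c1 y hy x hx hr)).symm⟩

theorem LrelExt_mono {X Y : Type u} (r r' : Rel' X Y) (h : relLe r r') :
    relLe (LrelExt M r) (LrelExt M r') := by
  rintro μ ν ⟨h1, h2, h3⟩
  refine ⟨fun x hx => ?_, fun y hy => ?_, fun U V hU hV c1 c2 => ?_⟩
  · obtain ⟨y, hy, hr⟩ := h1 x hx; exact ⟨y, hy, h _ _ hr⟩
  · obtain ⟨x, hx, hr⟩ := h2 y hy; exact ⟨x, hx, h _ _ hr⟩
  · exact h3 U V hU hV (fun x hx y hy hr => c1 x hx y hy (h _ _ hr))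
      (fun y hy x hx hr => c2 y hy x hx (h _ _ hr))

theorem LrelExt_comp {X Y Z : Type u} (r : Rel' X Y) (s : Rel' Y Z) :
    relLe (relComp (LrelExt M s) (LrelExt M r)) (LrelExt M (relComp s r)) := by
  classical
  rintro μ π ⟨ν, ⟨r1, r2, r3⟩, ⟨s1, s2, s3⟩⟩
  refine ⟨fun x hx => ?_, fun z hz => ?_, fun U W hU hW c1 c2 => ?_⟩
  · obtain ⟨y, hy, hr⟩ := r1 x hx
    obtain ⟨z, hz, hs⟩ := s1 y hy
    exact ⟨z, hz, y, hr, hs⟩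
  · obtain ⟨y, hy, hs⟩ := s2 z hz
    obtain ⟨x, hx, hr⟩ := r2 y hy
    exact ⟨x, hx, y, hr, hs⟩
  · set V : Finset Y :=
      ν.support.filter (fun b => (∃ x ∈ U, r x b) ∨ ∃ z ∈ W, s b z) with hVdef
    have hVsub : V ⊆ ν.support := Finset.filter_subset _ _
    have hrU : ∑ x ∈ U, μ x = ∑ y ∈ V, ν y := by
      refine r3 U V hU hVsub ?_ ?_
      · intro x hx y hy hr
        exact Finset.mem_filter.mpr ⟨hy, Or.inl ⟨x, hx, hr⟩⟩
      · intro b hb x hx hr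
        rcases (Finset.mem_filter.mp hb).2 with ⟨x', hx', hr'⟩ | ⟨z, hz, hs⟩
        · obtain ⟨z, hz, hs⟩ := s1 b (Finset.mem_filter.mp hb).1
          have hzW : z ∈ W := c1 x' hx' z hz ⟨b, hr', hs⟩
          exact c2 z hzW x hx ⟨b, hr, hs⟩
        · exact c2 z hz x hx ⟨b, hr, hs⟩
    have hsW : ∑ y ∈ V, ν y = ∑ z ∈ W, π z := by
      refine s3 V W hVsub hW ?_ ?_
      · intro b hb z hz hs
        rcases (Finset.mem_filter.mp hb).2 with ⟨x', hx', hr'⟩ | ⟨z', hz', hs'⟩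
        · exact c1 x' hx' z hz ⟨b, hr', hs⟩
        · obtain ⟨x, hx, hr⟩ := r2 b (Finset.mem_filter.mp hb).1
          have hxU : x ∈ U := c2 z' hz' x hx ⟨b, hr, hs'⟩
          exact c1 x hxU z hz ⟨b, hr, hs⟩
      · intro z hz b hb hs
        exact Finset.mem_filter.mpr ⟨hb, Or.inr ⟨z, hz, hs⟩⟩
    rw [hrU, hsW]

theorem LrelExt_map (hpos : ∀ a b : M, a + b = 0 → a = 0)
    {X Y : Type u} (f : X → Y) (μ : X →₀ M) :
    LrelExt M (graphRel f) μ (Finsupp.mapDomain f μ) := by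
  classical
  refine ⟨fun x hx => ⟨f x, mem_support_mapDomain hpos f μ hx, rfl⟩,
    fun y hy => ?_, fun U V hU hV c1 c2 => ?_⟩
  · obtain ⟨x, hx, hfx⟩ := Finset.mem_image.mp (Finsupp.mapDomain_support hy)
    exact ⟨x, hx, hfx⟩
  · have key : ∀ y ∈ V, Finsupp.mapDomain f μ y
        = ∑ x ∈ μ.support, if f x = y then μ x else 0 := fun y _ =>
      mapDomain_apply_eq_sum f μ y
    rw [Finset.sum_congr rfl key, Finset.sum_comm]
    have : ∀ x ∈ μ.support, (∑ y ∈ V, if f x = y then μ x else 0)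
        = if f x ∈ V then μ x else 0 := by
      intro x _
      exact Finset.sum_ite_eq V (f x) (fun _ => μ x)
    rw [Finset.sum_congr rfl this, ← Finset.sum_filter]
    have hUeq : μ.support.filter (fun x => f x ∈ V) = U := by
      ext x
      simp only [Finset.mem_filter]
      constructor
      · rintro ⟨hx, hfx⟩
        exact c2 (f x) hfx x hx rfl
      · intro hx
        exact ⟨hU hx, c1 x hx (f x) (mem_support_mapDomain hpos f μ (hU hx)) rfl⟩
    rw [hUeq]
end aux

/-- The constructed normal lax extension for positive `M`. -/
noncomputable def LposExt (M : Type u) [AddCommMonoid M]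
    (hpos : ∀ a b : M, a + b = 0 → a = 0) : LaxExt (finsuppFunctor M) where
  ext r := LrelExt M r
  mono := LrelExt_mono
  lcomp := LrelExt_comp
  mapLe f μ ν h := by
    have h' : Finsupp.mapDomain f μ = ν := h
    rw [← h']
    exact LrelExt_map hpos f μ
  mapConvLe f ν μ h := by
    have h' : Finsupp.mapDomain f μ = ν := h
    exact (LrelExt_conv _ _ _).mpr (h' ▸ LrelExt_map hpos f μ)

theorem LrelExt_id (M : Type u) [AddCommMonoid M] (X : Type u) :
    (fun (μ ν : X →₀ M) => LrelExt M (relId X) μ ν) = relId (X →₀ M) := by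
  funext μ ν
  apply propext
  constructor
  · rintro ⟨h1, h2, h3⟩
    show μ = ν
    apply Finsupp.ext
    intro x
    by_cases hx : x ∈ μ.support
    · obtain ⟨y, hy, rfl⟩ := h1 x hx
      have hxy : x ∈ ν.support := hy
      have := h3 {x} {x} (by simpa using hx) (by simpa using hxy)
        (by rintro x' hx' y' hy' rfl; simpa using Finset.mem_singleton.mp hx')
        (by rintro y' hy' x' hx' rfl; simpa using Finset.mem_singleton.mp hy')
      simpa using this
    · have hmu : μ x = 0 := Finsupp.notMem_support_iff.mp hx
      rw [hmu]
      by_contra hne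
      obtain ⟨x', hx', hid⟩ := h2 x (Finsupp.mem_support_iff.mpr fun h => hne h.symm)
      exact hx (hid ▸ hx')
  · rintro rfl
    refine ⟨fun x hx => ⟨x, hx, rfl⟩, fun x hx => ⟨x, hx, rfl⟩,
      fun U V hU hV c1 c2 => ?_⟩
    have hUV : U = V := by
      ext x
      constructor
      · intro hx; exact c1 x hx x (hU hx) rfl
      · intro hx; exact c2 x hx x (hV hx) rfl
    rw [hUV]

theorem LposExt_normal (M : Type u) [AddCommMonoid M]
    (hpos : ∀ a b : M, a + b = 0 → a = 0) : (LposExt M hpos).IsNormal := by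
  intro X
  exact LrelExt_id M X


/-- The monoid-valued functor admits a normal lax extension iff the monoid is positive. -/
theorem stmt4 (M : Type u) [AddCommMonoid M] :
    (∃ L : LaxExt (finsuppFunctor M), L.IsNormal) ↔ ∀ a b : M, a + b = 0 → a = 0 := by
  constructor
  · rintro ⟨L, hN⟩ a b hab
    classical
    set X := ULift.{u} Bool with hX
    set P := PUnit.{u + 1}
    set E := PEmpty.{u + 1}
    set f : X → P := fun _ => PUnit.unit with hf
    set i : E → X := fun e => e.elim with hi
    set μ : X →₀ M :=
      Finsupp.single (ULift.up false) a + Finsupp.single (ULift.up true) b with hμ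
    have hmapf : (finsuppFunctor M).map (TypeCat.ofHom f) μ = (0 : P →₀ M) := by
      show Finsupp.mapDomain f μ = 0
      rw [hμ, Finsupp.mapDomain_add, Finsupp.mapDomain_single, Finsupp.mapDomain_single,
        ← Finsupp.single_add, hab, Finsupp.single_zero]
    have hmapf0 : (finsuppFunctor M).map (TypeCat.ofHom f) (0 : X →₀ M) = (0 : P →₀ M) := by
      show Finsupp.mapDomain f (0 : X →₀ M) = 0
      exact Finsupp.mapDomain_zero
    have hmapi0 : (finsuppFunctor M).map (TypeCat.ofHom i) (0 : E →₀ M) = (0 : X →₀ M) := by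
      show Finsupp.mapDomain i (0 : E →₀ M) = 0
      exact Finsupp.mapDomain_zero
    have hA : L.ext (relComp (relConv (graphRel f)) (graphRel f)) μ (0 : X →₀ M) :=
      L.lcomp _ _ μ (0 : X →₀ M) ⟨(0 : P →₀ M), L.mapLe f μ (0 : P →₀ M) hmapf,
        L.mapConvLe f (0 : P →₀ M) (0 : X →₀ M) hmapf0⟩
    have hB : L.ext (relComp (graphRel i) (relConv (graphRel i)))
        (0 : X →₀ M) (0 : X →₀ M) :=
      L.lcomp _ _ (0 : X →₀ M) (0 : X →₀ M) ⟨(0 : E →₀ M),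
        L.mapConvLe i (0 : X →₀ M) (0 : E →₀ M) hmapi0,
        L.mapLe i (0 : E →₀ M) (0 : X →₀ M) hmapi0⟩
    have hC : L.ext (relComp (relComp (graphRel i) (relConv (graphRel i)))
        (relComp (relConv (graphRel f)) (graphRel f))) μ (0 : X →₀ M) :=
      L.lcomp _ _ μ (0 : X →₀ M) ⟨(0 : X →₀ M), hA, hB⟩
    have hle : relLe (relComp (relComp (graphRel i) (relConv (graphRel i)))
        (relComp (relConv (graphRel f)) (graphRel f))) (relId X) := by
      rintro x z ⟨y, -, e, he, -⟩
      exact absurd he.symm (by rw [hi]; exact fun h => e.elim)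
    have hD : L.ext (relId X) μ (0 : X →₀ M) := L.mono _ _ hle μ (0 : X →₀ M) hC
    rw [hN X] at hD
    have hμ0 : μ = 0 := hD
    have : μ (ULift.up false) = a := by
      rw [hμ]
      have hne : (ULift.up true : ULift.{u} Bool) ≠ ULift.up false := by
        intro h
        simpa using congrArg ULift.down h
      simp [Finsupp.single_apply, hne]
    rw [hμ0] at this
    simpa using this.symm
  · intro hpos
    exact ⟨LposExt M hpos, LposExt_normal M hpos⟩
end

section
/- A Set-functor F preserves 1/4-mono pullbacks if and only if it preserves inverse images. -/
open CategoryTheory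

universe u

/-- Pasting of pullback squares. -/
theorem pbPaste {P A X Y G Z : Type u} {q : P → A} {s : P → Y} {i : A → X}
    {f₀ : A → G} {f : X → Z} {m : G → Z} {e : Y → G}
    (hL : IsPBSquare q s f₀ e) (hR : IsPBSquare i f₀ f m) :
    IsPBSquare (fun p => i (q p)) s f (fun y => m (e y)) := by
  obtain ⟨cL, uL⟩ := hL
  obtain ⟨cR, uR⟩ := hR
  refine ⟨fun p => by rw [cR, cL], fun x y hxy => ?_⟩
  obtain ⟨a, ⟨ha1, ha2⟩, hau⟩ := uR x (e y) hxy
  obtain ⟨p, ⟨hp1, hp2⟩, hpu⟩ := uL a y ha2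
  refine ⟨p, ⟨by show i (q p) = x; rw [hp1, ha1], hp2⟩, ?_⟩
  rintro p' ⟨h1, h2⟩
  have hqa : q p' = a := hau (q p') ⟨h1, by rw [cL, h2]⟩
  exact hpu p' ⟨hqa, h2⟩

/-- Functors on `Type` preserve bijectivity. -/
theorem mapBijective (F : Type u ⥤ Type u) {A B : Type u} {f : A → B}
    (hf : Function.Bijective f) : Function.Bijective (F.map (TypeCat.ofHom f)) := by
  let eqv := Equiv.ofBijective f hf
  have h1 : (TypeCat.ofHom f ≫ TypeCat.ofHom (eqv.symm : B → A)) = 𝟙 A := by ext a; exact eqv.symm_apply_apply a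
  have h2 : (TypeCat.ofHom (eqv.symm : B → A) ≫ TypeCat.ofHom f) = 𝟙 B := by ext b; exact eqv.apply_symm_apply b
  have l1 : ∀ a, F.map (TypeCat.ofHom (eqv.symm : B → A)) (F.map (TypeCat.ofHom f) a) = a := fun a => by
    rw [← FunctorToTypes.map_comp_apply, h1, FunctorToTypes.map_id_apply]
  have l2 : ∀ b, F.map (TypeCat.ofHom f) (F.map (TypeCat.ofHom (eqv.symm : B → A)) b) = b := fun b => by
    rw [← FunctorToTypes.map_comp_apply, h2, FunctorToTypes.map_id_apply]
  exact ⟨Function.LeftInverse.injective l1, Function.RightInverse.surjective l2⟩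

/-- A functor preserving inverse images preserves pullback squares whose first
projection is bijective. -/
theorem aux1 {F : Type u ⥤ Type u} (h : PreservesInverseImages F)
    {P X Y Z : Type u} (q : P → X) (s : P → Y) (f' : X → Z) (e : Y → Z)
    (hq : Function.Bijective q) (hpb : IsPBSquare q s f' e) :
    IsPBSquare (F.map (TypeCat.ofHom q)) (F.map (TypeCat.ofHom s)) (F.map (TypeCat.ofHom f')) (F.map (TypeCat.ofHom e)) := by
  classical
  -- S : image of s, E : image of e restricted to S
  let S : Type u := {y : Y // ∃ p, s p = y}
  let i : S → Y := Subtype.val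
  let E : Type u := {z : Z // ∃ σ : S, e σ.1 = z}
  let incl : E → Z := Subtype.val
  let p₂' : S → E := fun σ => ⟨e σ.1, σ, rfl⟩
  let s₀ : P → S := fun p => ⟨s p, p, rfl⟩
  -- the square C
  have hCsq : IsPBSquare i p₂' e incl := by
    refine ⟨fun σ => rfl, fun y w hyw => ?_⟩
    obtain ⟨z, ⟨⟨y₀, p₀, hp₀⟩, hz⟩⟩ := w
    have hy : f' (q p₀) = e y := by
      rw [hpb.1 p₀, hp₀]
      exact hz.trans hyw.symm
    obtain ⟨p, ⟨_, hp2⟩, _⟩ := hpb.2 (q p₀) y hy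
    refine ⟨⟨y, p, hp2⟩, ⟨rfl, Subtype.ext hyw⟩, ?_⟩
    rintro σ' ⟨h1, _⟩
    exact Subtype.ext h1
  have hC : IsPBSquare (F.map (TypeCat.ofHom i)) (F.map (TypeCat.ofHom p₂')) (F.map (TypeCat.ofHom e)) (F.map (TypeCat.ofHom incl)) :=
    h S Y E Z i p₂' e incl Subtype.val_injective Subtype.val_injective hCsq
  -- p₂' is bijective
  have hp₂'bij : Function.Bijective p₂' := by
    constructor
    · rintro ⟨y, p, rfl⟩ ⟨y', p', rfl⟩ hee
      have hee' : e (s p) = e (s p') := congrArg Subtype.val hee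
      have hfq : f' (q p) = e (s p') := (hpb.1 p).trans hee'
      obtain ⟨p'', ⟨h1, h2⟩, _⟩ := hpb.2 (q p) (s p') hfq
      have : p'' = p := hq.1 h1
      subst this
      exact Subtype.ext h2
    · rintro ⟨z, σ, rfl⟩
      exact ⟨σ, rfl⟩
  have hFq := mapBijective F hq
  have hFp₂' := mapBijective F hp₂'bij
  -- commutation
  have hcomm : (TypeCat.ofHom q ≫ TypeCat.ofHom f' : P ⟶ Z) = (TypeCat.ofHom s ≫ TypeCat.ofHom e : P ⟶ Z) := by ext p; exact hpb.1 p
  have hsi : (TypeCat.ofHom s₀ ≫ TypeCat.ofHom i : P ⟶ Y) = TypeCat.ofHom s := by ext p; rfl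
  have hie : (TypeCat.ofHom i ≫ TypeCat.ofHom e : S ⟶ Z) = (TypeCat.ofHom p₂' ≫ TypeCat.ofHom incl : S ⟶ Z) := by ext σ; rfl
  refine ⟨fun t => ?_, fun a b hab => ?_⟩
  · rw [← FunctorToTypes.map_comp_apply, ← FunctorToTypes.map_comp_apply, hcomm]
  · obtain ⟨t, rfl⟩ := hFq.2 a
    -- compute F f' (F q t)
    have key : F.map (TypeCat.ofHom f') (F.map (TypeCat.ofHom q) t) = F.map (TypeCat.ofHom incl) (F.map (TypeCat.ofHom p₂') (F.map (TypeCat.ofHom s₀) t)) := by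
      rw [← FunctorToTypes.map_comp_apply, hcomm, ← hsi,
        ← FunctorToTypes.map_comp_apply, ← FunctorToTypes.map_comp_apply]
      have : ((TypeCat.ofHom s₀ ≫ TypeCat.ofHom i : P ⟶ Y) ≫ TypeCat.ofHom e : P ⟶ Z) = (TypeCat.ofHom s₀ ≫ (TypeCat.ofHom p₂' ≫ TypeCat.ofHom incl : S ⟶ Z) : P ⟶ Z) := by
        rw [Category.assoc, ← hie]
      rw [this, FunctorToTypes.map_comp_apply, FunctorToTypes.map_comp_apply]
    have hab' : F.map (TypeCat.ofHom e) b = F.map (TypeCat.ofHom incl) (F.map (TypeCat.ofHom p₂') (F.map (TypeCat.ofHom s₀) t)) := hab.symm.trans key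
    obtain ⟨sg, ⟨hσ1, hσ2⟩, _⟩ := hC.2 b (F.map (TypeCat.ofHom p₂') (F.map (TypeCat.ofHom s₀) t)) hab'
    have hσ : sg = F.map (TypeCat.ofHom s₀) t := hFp₂'.1 hσ2
    have hb : b = F.map (TypeCat.ofHom s) t := by
      rw [← hσ1, hσ, ← hsi, FunctorToTypes.map_comp_apply]
    refine ⟨t, ⟨rfl, hb.symm⟩, ?_⟩
    rintro t' ⟨h1, _⟩
    exact hFq.1 h1

/-- A Set-functor preserves 1/4-mono pullbacks iff it preserves inverse images. -/
theorem stmt5 (F : Type u ⥤ Type u) :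
    Preserves14MonoPullbacks F ↔ PreservesInverseImages F := by
  constructor
  · intro h P X Y Z p₁ p₂ f g hp₁ _ hpb
    exact h P X Y Z p₁ p₂ f g hp₁ hpb
  · intro h P X Y Z p₁ p₂ f g hp₁ hpb
    classical
    -- G : image of g ; X₀ : preimage of G under f
    let G : Type u := {z : Z // ∃ y, g y = z}
    let m : G → Z := Subtype.val
    let e : Y → G := fun y => ⟨g y, y, rfl⟩
    let X₀ : Type u := {x : X // ∃ y, g y = f x}
    let i : X₀ → X := Subtype.val
    let f₀ : X₀ → G := fun x => ⟨f x.1, x.2⟩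
    let q : P → X₀ := fun p => ⟨p₁ p, p₂ p, (hpb.1 p).symm⟩
    -- square B : (q, p₂, f₀, e)
    have hBsq : IsPBSquare q p₂ f₀ e := by
      refine ⟨fun p => Subtype.ext (hpb.1 p), fun x₀ y hxy => ?_⟩
      have hxy' : f x₀.1 = g y := congrArg Subtype.val hxy
      obtain ⟨p, ⟨h1, h2⟩, hu⟩ := hpb.2 x₀.1 y hxy'
      refine ⟨p, ⟨Subtype.ext h1, h2⟩, ?_⟩
      rintro p' ⟨h1', h2'⟩
      exact hu p' ⟨congrArg Subtype.val h1', h2'⟩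
    have hqbij : Function.Bijective q := by
      constructor
      · intro p p' hpp'
        exact hp₁ (congrArg Subtype.val hpp')
      · rintro ⟨x, y, hy⟩
        obtain ⟨p, ⟨h1, _⟩, _⟩ := hpb.2 x y hy.symm
        exact ⟨p, Subtype.ext h1⟩
    -- square A : (i, f₀, f, m) is an inverse image
    have hAsq : IsPBSquare i f₀ f m := by
      refine ⟨fun x₀ => rfl, fun x w hxw => ?_⟩
      obtain ⟨z, y, hy⟩ := w
      refine ⟨⟨x, y, hy.trans hxw.symm⟩, ⟨rfl, Subtype.ext hxw⟩, ?_⟩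
      rintro x₀' ⟨h1, _⟩
      exact Subtype.ext h1
    have hB := aux1 h q p₂ f₀ e hqbij hBsq
    have hA := h X₀ X G Z i f₀ f m Subtype.val_injective Subtype.val_injective hAsq
    have hpaste := pbPaste hB hA
    have h1 : (fun t => F.map (TypeCat.ofHom i) (F.map (TypeCat.ofHom q) t)) = F.map (TypeCat.ofHom p₁) := by
      funext t
      rw [← FunctorToTypes.map_comp_apply]
      rfl
    have h2 : (fun b => F.map (TypeCat.ofHom m) (F.map (TypeCat.ofHom e) b)) = F.map (TypeCat.ofHom g) := by
      funext b
      rw [← FunctorToTypes.map_comp_apply]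
      rfl
    rw [h1, h2] at hpaste
    exact hpaste
end

section
/- A Set-functor F admits a normal lax extension if and only if for every set X and every composable sequence of relations r₁, …, rₙ with rₙ ⋅ … ⋅ r₁ = 1_X, one has F̄rₙ ⋅ … ⋅ F̄r₁ ≤ 1_{F X}, where F̄ denotes the Barr lifting of F. -/
open CategoryTheory

universe u

section Aux

variable {F : Type u ⥤ Type u}

lemma relComp_mono {X Y Z : Type u} {r r' : Rel' X Y} {s s' : Rel' Y Z}
    (hr : relLe r r') (hs : relLe s s') : relLe (relComp s r) (relComp s' r') := by
  rintro x z ⟨y, h1, h2⟩; exact ⟨y, hr _ _ h1, hs _ _ h2⟩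

lemma relComp_assoc {X Y Z W : Type u} (r : Rel' X Y) (s : Rel' Y Z) (t : Rel' Z W) :
    relComp t (relComp s r) = relComp (relComp t s) r := by
  funext x w; apply propext
  constructor
  · rintro ⟨z, ⟨y, h1, h2⟩, h3⟩; exact ⟨y, h1, z, h2, h3⟩
  · rintro ⟨y, h1, z, h2, h3⟩; exact ⟨z, ⟨y, h1, h2⟩, h3⟩

/-- Introduce a Barr lifting fact from a map into the span vertex. -/
lemma barr_intro (F : Type u ⥤ Type u) {X Y W : Type u} (r : Rel' X Y)
    (u : W → {p : X × Y // r p.1 p.2}) (a : F.obj W) :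
    BarrLift F r (F.map (TypeCat.ofHom (fun w => (u w).1.1)) a) (F.map (TypeCat.ofHom (fun w => (u w).1.2)) a) := by
  refine ⟨F.map (TypeCat.ofHom u) a, ?_, ?_⟩ <;>
    rw [← FunctorToTypes.map_comp_apply] <;> rfl

lemma barrLift_mono_maps {X Y X' Y' : Type u} (r : Rel' X Y) (r' : Rel' X' Y')
    (j : X → X') (k : Y → Y') (h : ∀ x y, r x y → r' (j x) (k y)) {a b}
    (hab : BarrLift F r a b) : BarrLift F r' (F.map (TypeCat.ofHom j) a) (F.map (TypeCat.ofHom k) b) := by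
  obtain ⟨t, ht1, ht2⟩ := hab
  refine ⟨F.map (TypeCat.ofHom (fun p => ⟨(j p.1.1, k p.1.2), h _ _ p.2⟩)) t, ?_, ?_⟩ <;>
    rw [← FunctorToTypes.map_comp_apply]
  · rw [← ht1, ← FunctorToTypes.map_comp_apply]; rfl
  · rw [← ht2, ← FunctorToTypes.map_comp_apply]; rfl


/-- Append two composable chains. -/
def RelChain.app : ∀ {X Y Z : Type u}, RelChain X Y → RelChain Y Z → RelChain X Z
  | _, _, _, .single r, d => .cons r d
  | _, _, _, .cons r c, d => .cons r (RelChain.app c d)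

lemma RelChain.comp_app : ∀ {X Y Z : Type u} (c : RelChain X Y) (d : RelChain Y Z),
    (c.app d).comp = relComp d.comp c.comp
  | _, _, _, .single r, d => rfl
  | _, _, _, .cons r c, d => by
      show relComp (RelChain.comp (c.app d)) r = _
      rw [RelChain.comp_app c d]
      exact (relComp_assoc r c.comp d.comp).symm

lemma RelChain.barr_app : ∀ {X Y Z : Type u} (c : RelChain X Y) (d : RelChain Y Z),
    (c.app d).barr F = relComp (d.barr F) (c.barr F)
  | _, _, _, .single r, d => rfl
  | _, _, _, .cons r c, d => by
      show relComp (RelChain.barr F (c.app d)) (BarrLift F r) = _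
      rw [RelChain.barr_app c d]
      exact (relComp_assoc (BarrLift F r) (c.barr F) (d.barr F)).symm

/-- Every lax extension dominates the Barr lifting. -/
lemma barrLift_le_ext (L : LaxExt F) {X Y : Type u} (r : Rel' X Y) :
    relLe (BarrLift F r) (L.ext r) := by
  rintro a b ⟨t, ht1, ht2⟩
  have h1 : L.ext (relConv (graphRel (fun p : {p : X × Y // r p.1 p.2} => p.1.1))) a t :=
    L.mapConvLe _ _ _ ht1
  have h2 : L.ext (graphRel (fun p : {p : X × Y // r p.1 p.2} => p.1.2)) t b :=
    L.mapLe _ _ _ ht2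
  have h3 := L.lcomp _ _ _ _ ⟨t, h1, h2⟩
  refine L.mono _ _ ?_ _ _ h3
  rintro x y ⟨p, hp1, hp2⟩
  subst hp1; subst hp2; exact p.2

lemma barr_le_ext (L : LaxExt F) : ∀ {X Y : Type u} (c : RelChain X Y),
    relLe (c.barr F) (L.ext c.comp)
  | _, _, .single r => barrLift_le_ext L r
  | _, _, .cons r c => by
      intro a b hab
      exact L.lcomp _ _ _ _ <|
        relComp_mono (barrLift_le_ext L r) (barr_le_ext L c) _ _ hab

section Pad
variable {X : Type u}

def padFirst (B : X → Prop) {Y : Type u} (r : Rel' X Y) : Rel' (X ⊕ X) (Y ⊕ (X ⊕ X)) :=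
  fun p q => match p, q with
  | .inl x, .inl y => r x y
  | .inl x, .inr (.inl x') => B x ∧ x = x'
  | .inr x, .inr (.inr x') => x = x'
  | _, _ => False

def padMidRel {Y Z : Type u} (r : Rel' Y Z) : Rel' (Y ⊕ (X ⊕ X)) (Z ⊕ (X ⊕ X)) :=
  fun p q => match p, q with
  | .inl y, .inl z => r y z
  | .inr p, .inr q => p = q
  | _, _ => False

def padLast {Y : Type u} (r : Rel' Y X) : Rel' (Y ⊕ (X ⊕ X)) (X ⊕ X) :=
  fun p q => match p, q with
  | .inl y, .inl x => r y x
  | .inr (.inl x), .inl x' => x = x'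
  | .inr (.inr x), .inr x' => x = x'
  | _, _ => False

def padSingle (B : X → Prop) (r : Rel' X X) : Rel' (X ⊕ X) (X ⊕ X) :=
  fun p q => match p, q with
  | .inl x, .inl x' => r x x' ∨ (B x ∧ x = x')
  | .inr x, .inr x' => x = x'
  | _, _ => False

def padMid : ∀ {Y : Type u}, RelChain Y X → RelChain (Y ⊕ (X ⊕ X)) (X ⊕ X)
  | _, .single r => .single (padLast r)
  | _, .cons r c => .cons (padMidRel r) (padMid c)

def padC (B : X → Prop) : RelChain X X → RelChain (X ⊕ X) (X ⊕ X)
  | .single r => .single (padSingle B r)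
  | .cons r c => .cons (padFirst B r) (padMid c)


@[simp] lemma padMid_single {Y : Type u} (r : Rel' Y X) :
    padMid (X:=X) (.single r) = .single (padLast r) := by simp [padMid]
@[simp] lemma padMid_cons {Y Z : Type u} (r : Rel' Y Z) (c : RelChain Z X) :
    padMid (X:=X) (.cons r c) = .cons (padMidRel r) (padMid c) := by simp [padMid]
@[simp] lemma padC_single (B : X → Prop) (r : Rel' X X) :
    padC B (.single r) = .single (padSingle B r) := by simp [padC]
@[simp] lemma padC_cons (B : X → Prop) {Y : Type u} (r : Rel' X Y) (c : RelChain Y X) :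
    padC B (.cons r c) = .cons (padFirst B r) (padMid c) := by simp [padC]

lemma padMid_comp {Y : Type u} (c : RelChain Y X) :
    (padMid c).comp = padLast c.comp := by
  induction c with
  | single r => simp [RelChain.comp]
  | cons r c ih =>
      rw [padMid_cons]
      show relComp (padMid c).comp (padMidRel r) = padLast (relComp c.comp r)
      rw [ih]
      funext p q
      apply propext
      rcases p with y | (x | x) <;> rcases q with x' | x' <;>
        simp [relComp, padMidRel, padLast, Sum.exists]

lemma padC_comp (c : RelChain X X) (h1 : relLe c.comp (relId X)) :
    (padC (fun x => ¬ c.comp x x) c).comp = relId (X ⊕ X) := by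
  cases c with
  | single r =>
      rw [padC_single]
      show padSingle _ r = relId (X ⊕ X)
      funext p q
      apply propext
      rcases p with x | x <;> rcases q with x' | x' <;>
        simp [padSingle, relId, RelChain.comp] at h1 ⊢
      constructor
      · rintro (h | ⟨-, h⟩)
        · exact h1 _ _ h
        · exact h
      · intro h; subst h
        by_cases hr : r x x
        · exact Or.inl hr
        · exact Or.inr ⟨hr, rfl⟩
  | cons r c =>
      rw [padC_cons]
      show relComp (padMid c).comp (padFirst _ r) = relId (X ⊕ X)
      rw [padMid_comp]
      funext p q
      apply propext
      rcases p with x | x <;> rcases q with x' | x' <;>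
        simp [relComp, Sum.exists, padFirst, padLast, relId, RelChain.comp] at h1 ⊢
      · constructor
        · rintro (⟨y, hy1, hy2⟩ | ⟨-, h⟩)
          · exact h1 _ _ ⟨y, hy1, hy2⟩
          · exact h
        · intro h; subst h
          by_cases hx : ∃ y, r x y ∧ c.comp y x
          · exact Or.inl hx
          · exact Or.inr ⟨fun y hy1 hy2 => hx ⟨y, hy1, hy2⟩, rfl⟩

lemma padMid_barr {Y : Type u} (c : RelChain Y X) {a b} (h : c.barr F a b) :
    (padMid c).barr F (F.map (TypeCat.ofHom Sum.inl) a) (F.map (TypeCat.ofHom Sum.inl) b) := by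
  induction c with
  | single r =>
      rw [padMid_single]
      exact barrLift_mono_maps r (padLast r) Sum.inl Sum.inl (fun x y h => h) h
  | cons r c ih =>
      obtain ⟨m, h1, h2⟩ := h
      rw [padMid_cons]
      exact ⟨F.map (TypeCat.ofHom Sum.inl) m,
        barrLift_mono_maps r (padMidRel r) Sum.inl Sum.inl (fun x y h => h) h1, ih h2⟩

lemma padC_barr (B : X → Prop) (c : RelChain X X) {a b} (h : c.barr F a b) :
    (padC B c).barr F (F.map (TypeCat.ofHom Sum.inl) a) (F.map (TypeCat.ofHom Sum.inl) b) := by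
  cases c with
  | single r =>
      rw [padC_single]
      exact barrLift_mono_maps r (padSingle B r) Sum.inl Sum.inl
        (fun x y h => Or.inl h) h
  | cons r c =>
      obtain ⟨m, h1, h2⟩ := h
      rw [padC_cons]
      exact ⟨F.map (TypeCat.ofHom Sum.inl) m,
        barrLift_mono_maps r (padFirst B r) Sum.inl Sum.inl (fun x y h => h) h1,
        padMid_barr c h2⟩

lemma fmap_inl_inj (F : Type u ⥤ Type u) (X : Type u) :
    Function.Injective (F.map (TypeCat.ofHom (Sum.inl : X → X ⊕ X))) := by
  intro a b h
  have h2 := congrArg (F.map (TypeCat.ofHom (Sum.elim id id : X ⊕ X → X))) h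
  rw [← FunctorToTypes.map_comp_apply, ← FunctorToTypes.map_comp_apply] at h2
  rw [show (TypeCat.ofHom (Sum.inl : X → X ⊕ X) ≫ TypeCat.ofHom (Sum.elim id id)) = 𝟙 X from rfl] at h2
  rwa [FunctorToTypes.map_id_apply, FunctorToTypes.map_id_apply] at h2

lemma barr_le_id
    (hyp : ∀ (X : Type u) (c : RelChain X X), RelChain.comp c = relId X →
      relLe (RelChain.barr F c) (relId (F.obj X)))
    (c : RelChain X X) (h : relLe c.comp (relId X)) :
    relLe (c.barr F) (relId (F.obj X)) := by
  intro a b hab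
  have h2 := padC_barr (fun x => ¬ c.comp x x) c hab
  have h3 := hyp (X ⊕ X) _ (padC_comp c h) _ _ h2
  exact fmap_inl_inj F X h3

end Pad

/-- The least lax extension: unions of chains of Barr liftings. -/
def leastExt (F : Type u ⥤ Type u) : LaxExt F where
  ext {X Y} r := fun a b => ∃ c : RelChain X Y, relLe c.comp r ∧ c.barr F a b
  mono r r' h := by
    rintro a b ⟨c, hc, hb⟩
    exact ⟨c, fun x y hxy => h x y (hc x y hxy), hb⟩
  lcomp r s := by
    rintro a b ⟨m, ⟨c, hc, hb⟩, ⟨d, hd, he⟩⟩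
    refine ⟨c.app d, ?_, ?_⟩
    · rw [RelChain.comp_app]; exact relComp_mono hc hd
    · rw [RelChain.barr_app]; exact ⟨m, hb, he⟩
  mapLe {X Y} f := by
    intro a b hab
    refine ⟨.single (graphRel f), fun x y h => h, ?_⟩
    have h := barr_intro F (graphRel f) (fun x => ⟨(x, f x), rfl⟩) a
    have hid : F.map (TypeCat.ofHom (fun x : X => x)) a = a := by
      rw [show TypeCat.ofHom (fun x : X => x) = 𝟙 X from rfl]
      exact FunctorToTypes.map_id_apply F a
    show BarrLift F (graphRel f) a b
    rw [← hab]
    rwa [hid] at h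
  mapConvLe {X Y} f := by
    intro b a hab
    refine ⟨.single (relConv (graphRel f)), fun x y h => h, ?_⟩
    have h := barr_intro F (relConv (graphRel f)) (fun x => ⟨(f x, x), rfl⟩) a
    have hid : F.map (TypeCat.ofHom (fun x : X => x)) a = a := by
      rw [show TypeCat.ofHom (fun x : X => x) = 𝟙 X from rfl]
      exact FunctorToTypes.map_id_apply F a
    show BarrLift F (relConv (graphRel f)) b a
    rw [← hab]
    rwa [hid] at h

/-- A Set-functor admits a normal lax extension iff for every composable sequence of
relations composing to an identity, the composite of the Barr liftings is a subidentity. -/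
theorem stmt9 (F : Type u ⥤ Type u) :
    (∃ L : LaxExt F, L.IsNormal) ↔
      ∀ (X : Type u) (c : RelChain X X), RelChain.comp c = relId X →
        relLe (RelChain.barr F c) (relId (F.obj X)) := by
  constructor
  · rintro ⟨L, hL⟩ X c hc a b h
    have h2 := barr_le_ext L c a b h
    rwa [hc, hL X] at h2
  · intro hyp
    refine ⟨leastExt F, fun X => ?_⟩
    funext a b
    apply propext
    constructor
    · rintro ⟨c, hc, hb⟩
      exact barr_le_id hyp c hc a b hb
    · intro h
      refine ⟨.single (relId X), fun x y h => h, ?_⟩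
      have h2 := barr_intro F (relId X) (fun x => ⟨(x, x), rfl⟩) a
      have hid : F.map (TypeCat.ofHom (fun x : X => x)) a = a := by
        rw [show TypeCat.ofHom (fun x : X => x) = 𝟙 X from rfl]
        exact FunctorToTypes.map_id_apply F a
      show BarrLift F (relId X) a b
      rw [← h]
      rwa [hid] at h2
end Aux
end

section
/- Let F be a Set-functor, let r : X ⇸ Y be a relation, and let r₁, …, rₙ be a composable sequence of relations from X to Y with rₙ ⋅ … ⋅ r₁ ≤ r. Then there exists a composable sequence r₁', …, rₙ' (of the same length n) with rₙ' ⋅ … ⋅ r₁' = r and F̄rₙ ⋅ … ⋅ F̄r₁ ≤ F̄rₙ' ⋅ … ⋅ F̄r₁', where F̄ denotes the Barr lifting of F. -/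
open CategoryTheory

universe u

/-- `F.map id = id` pointwise. -/
lemma fmap_id (F : Type u ⥤ Type u) (X : Type u) (x : F.obj X) :
    F.map (TypeCat.ofHom (id : X → X)) x = x := by
  rw [show TypeCat.ofHom (id : X → X) = 𝟙 X from rfl, F.map_id]; rfl

/-- Relabeling lemma for Barr liftings. -/
lemma barrLift_map (F : Type u ⥤ Type u) {X Y X' Y' : Type u}
    (r : Rel' X Y) (r' : Rel' X' Y') (f : X → X') (g : Y → Y')
    (h : ∀ x y, r x y → r' (f x) (g y)) :
    ∀ a b, BarrLift F r a b → BarrLift F r' (F.map (TypeCat.ofHom f) a) (F.map (TypeCat.ofHom g) b) := by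
  rintro a b ⟨t, h1, h2⟩
  set m : {p : X × Y // r p.1 p.2} → {p : X' × Y' // r' p.1 p.2} :=
    fun p => ⟨(f p.1.1, g p.1.2), h _ _ p.2⟩ with hm
  refine ⟨F.map (TypeCat.ofHom m) t, ?_, ?_⟩
  · rw [← h1]
    have e1 := F.map_comp_apply (TypeCat.ofHom m) (TypeCat.ofHom (fun p : {p : X' × Y' // r' p.1 p.2} => p.1.1)) t
    have e2 := F.map_comp_apply (TypeCat.ofHom (fun p : {p : X × Y // r p.1 p.2} => p.1.1)) (TypeCat.ofHom f) t
    rw [← e1, ← e2]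
    rfl
  · rw [← h2]
    have e1 := F.map_comp_apply (TypeCat.ofHom m) (TypeCat.ofHom (fun p : {p : X' × Y' // r' p.1 p.2} => p.1.2)) t
    have e2 := F.map_comp_apply (TypeCat.ofHom (fun p : {p : X × Y // r p.1 p.2} => p.1.2)) (TypeCat.ofHom g) t
    rw [← e1, ← e2]
    rfl

/-- Extend a relation along the left summand, identity on the right summand. -/
def sumRel {W V X : Type u} (r0 : Rel' W V) : Rel' (W ⊕ X) (V ⊕ X) := fun a b =>
  match a, b with
  | .inl w, .inl v => r0 w v
  | .inr x, .inr x' => x = x'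
  | _, _ => False

lemma aux_chain (F : Type u ⥤ Type u) {W Y : Type u} (c : RelChain W Y)
    (X : Type u) (r : Rel' X Y) :
    ∃ c' : RelChain (W ⊕ X) Y, RelChain.length c' = RelChain.length c ∧
      (∀ w y, RelChain.comp c' (Sum.inl w) y ↔ RelChain.comp c w y) ∧
      (∀ x y, RelChain.comp c' (Sum.inr x) y ↔ r x y) ∧
      ∀ a b, RelChain.barr F c a b → RelChain.barr F c' (F.map (TypeCat.ofHom Sum.inl) a) b := by
  induction c with
  | @single W Y r0 =>
    refine ⟨.single (fun a y => match a with | .inl w => r0 w y | .inr x => r x y),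
      rfl, fun w y => Iff.rfl, fun x y => Iff.rfl, ?_⟩
    intro a b hab
    show BarrLift F (fun a y => match a with | .inl w => r0 w y | .inr x => r x y)
      (F.map (TypeCat.ofHom Sum.inl) a) b
    rw [← fmap_id F Y b]
    exact barrLift_map F r0 _ Sum.inl id (fun x y hxy => hxy) a b hab
  | @cons W V Y r0 c ih =>
    obtain ⟨c'', hlen, hinl, hinr, hbarr⟩ := ih r
    refine ⟨.cons (sumRel r0) c'', by simp [RelChain.length, hlen], ?_, ?_, ?_⟩
    · intro w y
      constructor
      · rintro ⟨mm, hm1, hm2⟩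
        cases mm with
        | inl v => exact ⟨v, hm1, (hinl v y).mp hm2⟩
        | inr x' => exact absurd hm1 (by simp [sumRel])
      · rintro ⟨v, hv1, hv2⟩
        exact ⟨Sum.inl v, hv1, (hinl v y).mpr hv2⟩
    · intro x y
      constructor
      · rintro ⟨mm, hm1, hm2⟩
        cases mm with
        | inl v => exact absurd hm1 (by simp [sumRel])
        | inr x' =>
          have hx : x = x' := hm1
          subst hx
          exact (hinr x y).mp hm2
      · intro hr
        exact ⟨Sum.inr x, rfl, (hinr x y).mpr hr⟩
    · rintro a d ⟨b, hab, hbd⟩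
      exact ⟨F.map (TypeCat.ofHom Sum.inl) b,
        barrLift_map F r0 (sumRel r0) Sum.inl Sum.inl (fun _ _ hh => hh) a b hab,
        hbarr b d hbd⟩

/-- Any composable sequence with composite `≤ r` admits a same-length composable sequence
with composite exactly `r` whose Barr-lifting composite is above the original one. -/
theorem stmt10 (F : Type u ⥤ Type u) (X Y : Type u) (r : Rel' X Y) (c : RelChain X Y)
    (h : relLe (RelChain.comp c) r) :
    ∃ c' : RelChain X Y, RelChain.length c' = RelChain.length c ∧
      RelChain.comp c' = r ∧ relLe (RelChain.barr F c) (RelChain.barr F c') := by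
  cases c with
  | single r1 =>
    refine ⟨.single r, rfl, rfl, ?_⟩
    intro a b hab
    show BarrLift F r a b
    rw [← fmap_id F X a, ← fmap_id F Y b]
    exact barrLift_map F r1 r id id (fun x y hxy => h x y hxy) a b hab
  | @cons _ V _ r1 c0 =>
    obtain ⟨c'', hlen, hinl, hinr, hbarr⟩ := aux_chain F c0 X r
    refine ⟨.cons (fun x mm => match mm with | .inl v => r1 x v | .inr x' => x = x') c'',
      by simp [RelChain.length, hlen], ?_, ?_⟩
    · funext x y
      apply propext
      constructor
      · rintro ⟨mm, hm1, hm2⟩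
        cases mm with
        | inl v => exact h x y ⟨v, hm1, (hinl v y).mp hm2⟩
        | inr x' =>
          have hx : x = x' := hm1
          subst hx
          exact (hinr x y).mp hm2
      · intro hr
        exact ⟨Sum.inr x, rfl, (hinr x y).mpr hr⟩
    · rintro a d ⟨b, hab, hbd⟩
      refine ⟨F.map (TypeCat.ofHom Sum.inl) b, ?_, hbarr b d hbd⟩
      show BarrLift F (fun x mm => match mm with | .inl v => r1 x v | .inr x' => x = x')
        a (F.map (TypeCat.ofHom Sum.inl) b)
      rw [← fmap_id F X a]
      exact barrLift_map F r1 _ id Sum.inl (fun _ _ hxy => hxy) a b hab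
end

section
/- For a Set-functor F, the following are equivalent: (i) F preserves 1/4-iso pullbacks; (ii) for all relations r₁ : X ⇸ Y, r₂ : Y ⇸ Z and r₃ : Z ⇸ X with r₃ ⋅ r₂ ⋅ r₁ ≤ 1_X, one has F̄r₃ ⋅ F̄r₂ ⋅ F̄r₁ ≤ 1_{F X}; (iii) for all relations r₁ : X ⇸ Y, r₂ : Y ⇸ Z and r₃ : Z ⇸ X with r₃ ⋅ r₂ ⋅ r₁ = 1_X, one has F̄r₃ ⋅ F̄r₂ ⋅ F̄r₁ ≤ 1_{F X}. Here F̄ denotes the Barr lifting of F. -/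
open CategoryTheory

universe u

namespace S12

private lemma fmap_fmap (F : Type u ⥤ Type u) {A B C : Type u} (u : A → B) (v : B → C)
    (t : F.obj A) : F.map (TypeCat.ofHom v) (F.map (TypeCat.ofHom u) t) = F.map (TypeCat.ofHom (fun a => v (u a))) t :=
  (FunctorToTypes.map_comp_apply F (TypeCat.ofHom u) (TypeCat.ofHom v) t).symm

private lemma fmap_congr (F : Type u ⥤ Type u) {A B : Type u} {u v : A → B}
    (h : ∀ a, u a = v a) (t : F.obj A) : F.map (TypeCat.ofHom u) t = F.map (TypeCat.ofHom v) t := by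
  rw [funext h]

/-- The basic consequence of preservation of 1/4-iso pullbacks. -/
private theorem m2 (F : Type u ⥤ Type u) (hF : Preserves14IsoPullbacks F) {W V T : Type u}
    (f : W → V) (g : T → V) (h : T → W)
    (hfh : ∀ t, f (h t) = g t) (hC : ∀ w t, f w = g t → w = h t)
    (x : F.obj W) (y : F.obj T) (pre : F.map (TypeCat.ofHom f) x = F.map (TypeCat.ofHom g) y) : x = F.map (TypeCat.ofHom h) y := by
  have hsq : IsPBSquare h (id : T → T) f g :=
    ⟨fun p => hfh p, fun w t hw => ⟨t, ⟨(hC w t hw).symm, rfl⟩, fun q hq => hq.2⟩⟩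
  obtain ⟨p, ⟨hp1, hp2⟩, -⟩ := (hF T W T V h id f g Function.bijective_id hsq).2 x y pre
  have hp2' : p = y := by
    have hid : F.map (TypeCat.ofHom (id : T → T)) p = p := FunctorToTypes.map_id_apply F p
    rwa [hid] at hp2
  rw [← hp1, hp2']

section BigDefs

variable {X Y Z : Type u}

/-- The canonical subtype of a relation (matching `BarrLift`). -/
abbrev Rs {A B : Type u} (r : Rel' A B) : Type u := {p : A × B // r p.1 p.2}

variable (r₁ : Rel' X Y) (r₂ : Rel' Y Z) (r₃ : Rel' Z X)

/-- `z` is reachable: some `x → y → z` chain exists. -/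
def reach (z : Z) : Prop := ∃ x y, r₁ x y ∧ r₂ y z

/-- `y` is co-reachable: some `y → z → x` chain exists. -/
def cor (y : Y) : Prop := ∃ z x, r₂ y z ∧ r₃ z x

variable (x₀ : X)

open Classical in
noncomputable def pd (y : Y) : X := if h : ∃ x, r₁ x y then h.choose else x₀

open Classical in
noncomputable def sc (z : Z) : X := if h : ∃ x, r₃ z x then h.choose else x₀

variable {r₁ r₂ r₃}

lemma sc_eq (hU : ∀ x y z x', r₁ x y → r₂ y z → r₃ z x' → x = x')
    {z : Z} {x' : X} (hr : reach r₁ r₂ z) (h3 : r₃ z x') : sc r₃ x₀ z = x' := by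
  obtain ⟨x, y, h1, h2⟩ := hr
  have hex : ∃ x, r₃ z x := ⟨x', h3⟩
  rw [sc, dif_pos hex]
  exact (hU x y z hex.choose h1 h2 hex.choose_spec).symm.trans (hU x y z x' h1 h2 h3)

lemma pd_eq (hU : ∀ x y z x', r₁ x y → r₂ y z → r₃ z x' → x = x')
    {y : Y} {x : X} (hc : cor r₂ r₃ y) (h1 : r₁ x y) : pd r₁ x₀ y = x := by
  obtain ⟨z, x', h2, h3⟩ := hc
  have hex : ∃ x, r₁ x y := ⟨x, h1⟩
  rw [pd, dif_pos hex]
  exact (hU hex.choose y z x' hex.choose_spec h2 h3).trans (hU x y z x' h1 h2 h3).symm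

variable (r₁ r₂ r₃)

/-- The common junk target. -/
abbrev VV : Type u := X ⊕ (Y ⊕ (Z ⊕ (Y × Z)))

abbrev jY (y : Y) : VV (X := X) (Y := Y) (Z := Z) := Sum.inr (Sum.inl y)
abbrev jZ (z : Z) : VV (X := X) (Y := Y) (Z := Z) := Sum.inr (Sum.inr (Sum.inl z))
abbrev jJ (p : Y × Z) : VV (X := X) (Y := Y) (Z := Z) := Sum.inr (Sum.inr (Sum.inr p))

/-- Extraction back to `X`. -/
def θv : VV (X := X) (Y := Y) (Z := Z) → X := fun v =>
  match v with
  | Sum.inl x => x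
  | Sum.inr _ => x₀

@[simp] lemma θv_inl (x : X) : θv (X := X) (Y := Y) (Z := Z) x₀ (Sum.inl x) = x := rfl
@[simp] lemma θv_inr (w : Y ⊕ (Z ⊕ (Y × Z))) : θv (X := X) x₀ (Sum.inr w) = x₀ := rfl

/- ### the two basic transport squares -/

abbrev W5 : Type u := {z : Z // ∃ x, r₃ z x} ⊕ {p : Y × Z // r₂ p.1 p.2 ∧ ¬ ∃ x, r₃ p.2 x}

def f5 : W5 r₂ r₃ → Z := fun w =>
  match w with
  | Sum.inl s => s.val
  | Sum.inr q => q.val.2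

open Classical in
noncomputable def rho5 : Rs r₂ → W5 r₂ r₃ := fun q =>
  if h : ∃ x, r₃ q.val.2 x then Sum.inl ⟨q.val.2, h⟩ else Sum.inr ⟨q.val, q.prop, h⟩

def h5 : Rs r₃ → W5 r₂ r₃ := fun t => Sum.inl ⟨t.val.1, ⟨t.val.2, t.prop⟩⟩

lemma f5_rho5 (q : Rs r₂) : f5 r₂ r₃ (rho5 r₂ r₃ q) = q.val.2 := by
  rw [rho5]; split <;> rfl

lemma f5_h5 (t : Rs r₃) : f5 r₂ r₃ (h5 r₂ r₃ t) = t.val.1 := rfl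

lemma C5 : ∀ (w : W5 r₂ r₃) (t : Rs r₃), f5 r₂ r₃ w = t.val.1 → w = h5 r₂ r₃ t := by
  rintro (s | q) t hw
  · exact congrArg Sum.inl (Subtype.ext hw)
  · have hw' : q.val.2 = t.val.1 := hw
    exact absurd ⟨t.val.2, show r₃ q.val.2 t.val.2 from hw' ▸ t.prop⟩ q.prop.2

abbrev W6 : Type u := {y : Y // ∃ x, r₁ x y} ⊕ {p : Y × Z // r₂ p.1 p.2 ∧ ¬ ∃ x, r₁ x p.1}

def f6 : W6 r₁ r₂ → Y := fun w =>
  match w with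
  | Sum.inl s => s.val
  | Sum.inr q => q.val.1

open Classical in
noncomputable def rho6 : Rs r₂ → W6 r₁ r₂ := fun q =>
  if h : ∃ x, r₁ x q.val.1 then Sum.inl ⟨q.val.1, h⟩ else Sum.inr ⟨q.val, q.prop, h⟩

def h6 : Rs r₁ → W6 r₁ r₂ := fun t => Sum.inl ⟨t.val.2, ⟨t.val.1, t.prop⟩⟩

lemma f6_rho6 (q : Rs r₂) : f6 r₁ r₂ (rho6 r₁ r₂ q) = q.val.1 := by
  rw [rho6]; split <;> rfl

lemma f6_h6 (t : Rs r₁) : f6 r₁ r₂ (h6 r₁ r₂ t) = t.val.2 := rfl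

lemma C6 : ∀ (w : W6 r₁ r₂) (t : Rs r₁), f6 r₁ r₂ w = t.val.2 → w = h6 r₁ r₂ t := by
  rintro (s | q) t hw
  · exact congrArg Sum.inl (Subtype.ext hw)
  · have hw' : q.val.1 = t.val.2 := hw
    exact absurd ⟨t.val.1, show r₁ t.val.1 q.val.1 from hw' ▸ t.prop⟩ q.prop.2

/- ### the comparison maps into `VV` -/

open Classical in
noncomputable def lam5 : W5 r₂ r₃ → VV (X := X) (Y := Y) (Z := Z) := fun w =>
  match w with
  | Sum.inl s => if reach r₁ r₂ s.val then Sum.inl (sc r₃ x₀ s.val) else jZ s.val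
  | Sum.inr q =>
      if ∃ x, r₁ x q.val.1 then
        (if cor r₂ r₃ q.val.1 then Sum.inl (pd r₁ x₀ q.val.1) else jY q.val.1)
      else jJ q.val

open Classical in
noncomputable def lam6 : W6 r₁ r₂ → VV (X := X) (Y := Y) (Z := Z) := fun w =>
  match w with
  | Sum.inl s => if cor r₂ r₃ s.val then Sum.inl (pd r₁ x₀ s.val) else jY s.val
  | Sum.inr q =>
      if ∃ x, r₃ q.val.2 x then
        (if reach r₁ r₂ q.val.2 then Sum.inl (sc r₃ x₀ q.val.2) else jZ q.val.2)
      else jJ q.val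

open Classical in
noncomputable def mu5 : W5 r₂ r₃ → VV (X := X) (Y := Y) (Z := Z) := fun w =>
  match w with
  | Sum.inl s => if reach r₁ r₂ s.val then Sum.inl (sc r₃ x₀ s.val) else jZ s.val
  | Sum.inr q => jJ q.val

open Classical in
noncomputable def mu2 : W6 r₁ r₂ → VV (X := X) (Y := Y) (Z := Z) := fun w =>
  match w with
  | Sum.inl s => if cor r₂ r₃ s.val then Sum.inl (pd r₁ x₀ s.val) else jY s.val
  | Sum.inr q => jJ q.val

lemma mu5_h5 (t : Rs r₃) :
    mu5 r₁ r₂ r₃ x₀ (h5 r₂ r₃ t) = lam5 r₁ r₂ r₃ x₀ (h5 r₂ r₃ t) := rfl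

lemma mu2_h6 (t : Rs r₁) :
    mu2 r₁ r₂ r₃ x₀ (h6 r₁ r₂ t) = lam6 r₁ r₂ r₃ x₀ (h6 r₁ r₂ t) := rfl

variable {r₁ r₂ r₃}

lemma lam_eq (hU : ∀ x y z x', r₁ x y → r₂ y z → r₃ z x' → x = x') (q : Rs r₂) :
    lam6 r₁ r₂ r₃ x₀ (rho6 r₁ r₂ q) = lam5 r₁ r₂ r₃ x₀ (rho5 r₂ r₃ q) := by
  classical
  by_cases hP : ∃ x, r₁ x q.val.1 <;> by_cases hS : ∃ x, r₃ q.val.2 x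
  · -- both
    rw [rho6, dif_pos hP, rho5, dif_pos hS]
    have hcor : cor r₂ r₃ q.val.1 := ⟨q.val.2, hS.choose, q.prop, hS.choose_spec⟩
    have hreach : reach r₁ r₂ q.val.2 := ⟨hP.choose, q.val.1, hP.choose_spec, q.prop⟩
    show (if cor r₂ r₃ q.val.1 then Sum.inl (pd r₁ x₀ q.val.1) else jY q.val.1)
      = (if reach r₁ r₂ q.val.2 then Sum.inl (sc r₃ x₀ q.val.2) else jZ q.val.2)
    rw [if_pos hcor, if_pos hreach]
    have e1 : pd r₁ x₀ q.val.1 = hP.choose := pd_eq x₀ hU hcor hP.choose_spec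
    have e2 : sc r₃ x₀ q.val.2 = hS.choose := sc_eq x₀ hU hreach hS.choose_spec
    rw [e1, e2, hU hP.choose q.val.1 q.val.2 hS.choose hP.choose_spec q.prop hS.choose_spec]
  · -- hP, ¬hS
    rw [rho6, dif_pos hP, rho5, dif_neg hS]
    show (if cor r₂ r₃ q.val.1 then Sum.inl (pd r₁ x₀ q.val.1) else jY q.val.1)
      = (if ∃ x, r₁ x q.val.1 then
          (if cor r₂ r₃ q.val.1 then Sum.inl (pd r₁ x₀ q.val.1) else jY q.val.1)
        else jJ q.val)
    rw [if_pos hP]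
  · -- ¬hP, hS
    rw [rho6, dif_neg hP, rho5, dif_pos hS]
    show (if ∃ x, r₃ q.val.2 x then
          (if reach r₁ r₂ q.val.2 then Sum.inl (sc r₃ x₀ q.val.2) else jZ q.val.2)
        else jJ q.val)
      = (if reach r₁ r₂ q.val.2 then Sum.inl (sc r₃ x₀ q.val.2) else jZ q.val.2)
    rw [if_pos hS]
  · -- neither
    rw [rho6, dif_neg hP, rho5, dif_neg hS]
    show (if ∃ x, r₃ q.val.2 x then _ else jJ q.val)
      = (if ∃ x, r₁ x q.val.1 then _ else jJ q.val)
    rw [if_neg hS, if_neg hP]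


/- ### the two final squares -/

variable (r₁ r₂ r₃)

abbrev WZ (r₃ : Rel' Z X) : Type u := X ⊕ (Rs r₃ ⊕ (Y ⊕ (Y × Z)))

def fZ : WZ (Y := Y) r₃ → VV (X := X) (Y := Y) (Z := Z) := fun w =>
  match w with
  | Sum.inl x => Sum.inl x
  | Sum.inr (Sum.inl t) => jZ t.val.1
  | Sum.inr (Sum.inr (Sum.inl y)) => jY y
  | Sum.inr (Sum.inr (Sum.inr p)) => jJ p

open Classical in
noncomputable def rhoZ : Rs r₃ → WZ (Y := Y) r₃ := fun t =>
  if reach r₁ r₂ t.val.1 then Sum.inl t.val.2 else Sum.inr (Sum.inl t)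

open Classical in
noncomputable def hZ : Rs r₂ → WZ (Y := Y) r₃ := fun q =>
  if ∃ x, r₁ x q.val.1 then
    (if cor r₂ r₃ q.val.1 then Sum.inl (pd r₁ x₀ q.val.1)
     else Sum.inr (Sum.inr (Sum.inl q.val.1)))
  else Sum.inr (Sum.inr (Sum.inr q.val))

def muZ : WZ (Y := Y) r₃ → X := fun w =>
  match w with
  | Sum.inl x => x
  | Sum.inr (Sum.inl t) => t.val.2
  | Sum.inr (Sum.inr _) => x₀

def muZ' : WZ (Y := Y) r₃ → X := fun w =>
  match w with
  | Sum.inl x => x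
  | Sum.inr _ => x₀

variable {r₁ r₂ r₃}

lemma fZ_rhoZ (hU : ∀ x y z x', r₁ x y → r₂ y z → r₃ z x' → x = x') (t : Rs r₃) :
    fZ r₃ (rhoZ r₁ r₂ r₃ t) = lam5 r₁ r₂ r₃ x₀ (h5 r₂ r₃ t) := by
  classical
  show fZ r₃ (if reach r₁ r₂ t.val.1 then Sum.inl t.val.2 else Sum.inr (Sum.inl t))
    = (if reach r₁ r₂ t.val.1 then Sum.inl (sc r₃ x₀ t.val.1) else jZ t.val.1)
  split_ifs with hr
  · show Sum.inl t.val.2 = Sum.inl (sc r₃ x₀ t.val.1)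
    rw [sc_eq x₀ hU hr t.prop]
  · rfl

lemma fZ_hZ (q : Rs r₂) :
    fZ r₃ (hZ r₁ r₂ r₃ x₀ q) = mu2 r₁ r₂ r₃ x₀ (rho6 r₁ r₂ q) := by
  classical
  by_cases hP : ∃ x, r₁ x q.val.1
  · rw [hZ, if_pos hP, rho6, dif_pos hP]
    show fZ r₃ (if cor r₂ r₃ q.val.1 then _ else _)
      = (if cor r₂ r₃ q.val.1 then Sum.inl (pd r₁ x₀ q.val.1) else jY q.val.1)
    split_ifs with hc <;> rfl
  · rw [hZ, if_neg hP, rho6, dif_neg hP]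
    rfl

lemma CZ : ∀ (w : WZ (Y := Y) r₃) (q : Rs r₂),
    fZ r₃ w = mu2 r₁ r₂ r₃ x₀ (rho6 r₁ r₂ q) → w = hZ r₁ r₂ r₃ x₀ q := by
  classical
  intro w q hw
  by_cases hP : ∃ x, r₁ x q.val.1
  · rw [rho6, dif_pos hP] at hw
    rw [hZ, if_pos hP]
    by_cases hc : cor r₂ r₃ q.val.1
    · rw [show mu2 r₁ r₂ r₃ x₀ (Sum.inl ⟨q.val.1, hP⟩)
          = (if cor r₂ r₃ q.val.1 then Sum.inl (pd r₁ x₀ q.val.1) else jY q.val.1) from rfl,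
        if_pos hc] at hw
      rw [if_pos hc]
      rcases w with x | (t | (y | p)) <;> simp only [fZ, jY, jZ, jJ] at hw <;> simp_all
    · rw [show mu2 r₁ r₂ r₃ x₀ (Sum.inl ⟨q.val.1, hP⟩)
          = (if cor r₂ r₃ q.val.1 then Sum.inl (pd r₁ x₀ q.val.1) else jY q.val.1) from rfl,
        if_neg hc] at hw
      rw [if_neg hc]
      rcases w with x | (t | (y | p)) <;> simp only [fZ, jY, jZ, jJ] at hw <;> simp_all
  · rw [rho6, dif_neg hP] at hw
    rw [hZ, if_neg hP]
    rcases w with x | (t | (y | p)) <;> simp only [fZ, jY, jZ, jJ, mu2] at hw <;> simp_all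

lemma muZ_rhoZ (t : Rs r₃) : muZ r₃ x₀ (rhoZ r₁ r₂ r₃ t) = t.val.2 := by
  classical
  rw [rhoZ]; split <;> rfl

lemma muZmuZ'_hZ (q : Rs r₂) :
    muZ r₃ x₀ (hZ r₁ r₂ r₃ x₀ q) = muZ' r₃ x₀ (hZ r₁ r₂ r₃ x₀ q) := by
  classical
  rw [hZ]; split_ifs <;> rfl

lemma muZ'_rhoZ (hU : ∀ x y z x', r₁ x y → r₂ y z → r₃ z x' → x = x') (t : Rs r₃) :
    muZ' r₃ x₀ (rhoZ r₁ r₂ r₃ t) = θv x₀ (lam5 r₁ r₂ r₃ x₀ (h5 r₂ r₃ t)) := by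
  classical
  show muZ' r₃ x₀ (if reach r₁ r₂ t.val.1 then Sum.inl t.val.2 else Sum.inr (Sum.inl t))
    = θv x₀ (if reach r₁ r₂ t.val.1 then Sum.inl (sc r₃ x₀ t.val.1) else jZ t.val.1)
  split_ifs with hr
  · show t.val.2 = sc r₃ x₀ t.val.1
    exact (sc_eq x₀ hU hr t.prop).symm
  · rfl

/- mirror -/

variable (r₁ r₂ r₃)

abbrev WY (r₁ : Rel' X Y) : Type u := X ⊕ (Rs r₁ ⊕ (Z ⊕ (Y × Z)))

def fY : WY (Z := Z) r₁ → VV (X := X) (Y := Y) (Z := Z) := fun w =>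
  match w with
  | Sum.inl x => Sum.inl x
  | Sum.inr (Sum.inl t) => jY t.val.2
  | Sum.inr (Sum.inr (Sum.inl z)) => jZ z
  | Sum.inr (Sum.inr (Sum.inr p)) => jJ p

open Classical in
noncomputable def rhoY : Rs r₁ → WY (Z := Z) r₁ := fun t =>
  if cor r₂ r₃ t.val.2 then Sum.inl t.val.1 else Sum.inr (Sum.inl t)

open Classical in
noncomputable def hY : Rs r₂ → WY (Z := Z) r₁ := fun q =>
  if ∃ x, r₃ q.val.2 x then
    (if reach r₁ r₂ q.val.2 then Sum.inl (sc r₃ x₀ q.val.2)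
     else Sum.inr (Sum.inr (Sum.inl q.val.2)))
  else Sum.inr (Sum.inr (Sum.inr q.val))

def nuY : WY (Z := Z) r₁ → X := fun w =>
  match w with
  | Sum.inl x => x
  | Sum.inr (Sum.inl t) => t.val.1
  | Sum.inr (Sum.inr _) => x₀

def nuY' : WY (Z := Z) r₁ → X := fun w =>
  match w with
  | Sum.inl x => x
  | Sum.inr _ => x₀

variable {r₁ r₂ r₃}

lemma fY_rhoY (hU : ∀ x y z x', r₁ x y → r₂ y z → r₃ z x' → x = x') (t : Rs r₁) :
    fY r₁ (rhoY r₁ r₂ r₃ t) = lam6 r₁ r₂ r₃ x₀ (h6 r₁ r₂ t) := by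
  classical
  show fY r₁ (if cor r₂ r₃ t.val.2 then Sum.inl t.val.1 else Sum.inr (Sum.inl t))
    = (if cor r₂ r₃ t.val.2 then Sum.inl (pd r₁ x₀ t.val.2) else jY t.val.2)
  split_ifs with hc
  · show Sum.inl t.val.1 = Sum.inl (pd r₁ x₀ t.val.2)
    rw [pd_eq x₀ hU hc t.prop]
  · rfl

lemma fY_hY (q : Rs r₂) :
    fY r₁ (hY r₁ r₂ r₃ x₀ q) = mu5 r₁ r₂ r₃ x₀ (rho5 r₂ r₃ q) := by
  classical
  by_cases hS : ∃ x, r₃ q.val.2 x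
  · rw [hY, if_pos hS, rho5, dif_pos hS]
    show fY r₁ (if reach r₁ r₂ q.val.2 then _ else _)
      = (if reach r₁ r₂ q.val.2 then Sum.inl (sc r₃ x₀ q.val.2) else jZ q.val.2)
    split_ifs with hr <;> rfl
  · rw [hY, if_neg hS, rho5, dif_neg hS]
    rfl

lemma CY : ∀ (w : WY (Z := Z) r₁) (q : Rs r₂),
    fY r₁ w = mu5 r₁ r₂ r₃ x₀ (rho5 r₂ r₃ q) → w = hY r₁ r₂ r₃ x₀ q := by
  classical
  intro w q hw
  by_cases hS : ∃ x, r₃ q.val.2 x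
  · rw [rho5, dif_pos hS] at hw
    rw [hY, if_pos hS]
    by_cases hr : reach r₁ r₂ q.val.2
    · rw [show mu5 r₁ r₂ r₃ x₀ (Sum.inl ⟨q.val.2, hS⟩)
          = (if reach r₁ r₂ q.val.2 then Sum.inl (sc r₃ x₀ q.val.2) else jZ q.val.2) from rfl,
        if_pos hr] at hw
      rw [if_pos hr]
      rcases w with x | (t | (z | p)) <;> simp only [fY, jY, jZ, jJ] at hw <;> simp_all
    · rw [show mu5 r₁ r₂ r₃ x₀ (Sum.inl ⟨q.val.2, hS⟩)
          = (if reach r₁ r₂ q.val.2 then Sum.inl (sc r₃ x₀ q.val.2) else jZ q.val.2) from rfl,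
        if_neg hr] at hw
      rw [if_neg hr]
      rcases w with x | (t | (z | p)) <;> simp only [fY, jY, jZ, jJ] at hw <;> simp_all
  · rw [rho5, dif_neg hS] at hw
    rw [hY, if_neg hS]
    rcases w with x | (t | (z | p)) <;> simp only [fY, jY, jZ, jJ, mu5] at hw <;> simp_all

lemma nuY_rhoY (t : Rs r₁) : nuY r₁ x₀ (rhoY r₁ r₂ r₃ t) = t.val.1 := by
  classical
  rw [rhoY]; split <;> rfl

lemma nuYnuY'_hY (q : Rs r₂) :
    nuY r₁ x₀ (hY r₁ r₂ r₃ x₀ q) = nuY' r₁ x₀ (hY r₁ r₂ r₃ x₀ q) := by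
  classical
  rw [hY]; split_ifs <;> rfl

lemma nuY'_rhoY (hU : ∀ x y z x', r₁ x y → r₂ y z → r₃ z x' → x = x') (t : Rs r₁) :
    nuY' r₁ x₀ (rhoY r₁ r₂ r₃ t) = θv x₀ (lam6 r₁ r₂ r₃ x₀ (h6 r₁ r₂ t)) := by
  classical
  show nuY' r₁ x₀ (if cor r₂ r₃ t.val.2 then Sum.inl t.val.1 else Sum.inr (Sum.inl t))
    = θv x₀ (if cor r₂ r₃ t.val.2 then Sum.inl (pd r₁ x₀ t.val.2) else jY t.val.2)
  split_ifs with hc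
  · show t.val.1 = pd r₁ x₀ t.val.2
    exact (pd_eq x₀ hU hc t.prop).symm
  · rfl

end BigDefs


theorem big (F : Type u ⥤ Type u) (hF : Preserves14IsoPullbacks F) {X Y Z : Type u}
    (r₁ : Rel' X Y) (r₂ : Rel' Y Z) (r₃ : Rel' Z X)
    (hU : ∀ x y z x', r₁ x y → r₂ y z → r₃ z x' → x = x')
    (t₁ : F.obj (Rs r₁)) (t₂ : F.obj (Rs r₂)) (t₃ : F.obj (Rs r₃))
    (hb : F.map (TypeCat.ofHom (fun p : Rs r₁ => p.val.2)) t₁ = F.map (TypeCat.ofHom (fun p : Rs r₂ => p.val.1)) t₂)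
    (hc : F.map (TypeCat.ofHom (fun p : Rs r₂ => p.val.2)) t₂ = F.map (TypeCat.ofHom (fun p : Rs r₃ => p.val.1)) t₃) :
    F.map (TypeCat.ofHom (fun p : Rs r₁ => p.val.1)) t₁ = F.map (TypeCat.ofHom (fun p : Rs r₃ => p.val.2)) t₃ := by
  rcases isEmpty_or_nonempty X with hX | hX
  · haveI h1 : IsEmpty (Rs r₁) := ⟨fun p => hX.false p.val.1⟩
    haveI h3 : IsEmpty (Rs r₃) := ⟨fun p => hX.false p.val.2⟩
    have e2 : t₂ = F.map (TypeCat.ofHom (fun t : Rs r₁ => (isEmptyElim t : Rs r₂))) t₁ :=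
      m2 F hF (fun q : Rs r₂ => q.val.1) (fun t : Rs r₁ => t.val.2)
        (fun t => isEmptyElim t) (fun t => isEmptyElim t) (fun _ t _ => isEmptyElim t)
        t₂ t₁ hb.symm
    have pre3 : F.map (TypeCat.ofHom (fun q : Rs r₃ => q.val.1)) t₃
        = F.map (TypeCat.ofHom (fun t : Rs r₁ => ((isEmptyElim t : Rs r₂)).val.2)) t₁ := by
      rw [← hc, e2, fmap_fmap]
    have e3 : t₃ = F.map (TypeCat.ofHom (fun t : Rs r₁ => (isEmptyElim t : Rs r₃))) t₁ :=
      m2 F hF (fun q : Rs r₃ => q.val.1) (fun t : Rs r₁ => ((isEmptyElim t : Rs r₂)).val.2)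
        (fun t => isEmptyElim t) (fun t => isEmptyElim t) (fun _ t _ => isEmptyElim t)
        t₃ t₁ pre3
    rw [e3, fmap_fmap]
    exact fmap_congr F (fun t => isEmptyElim t) t₁
  · obtain ⟨x₀⟩ := hX
    have pre5 : F.map (TypeCat.ofHom (f5 r₂ r₃)) (F.map (TypeCat.ofHom (rho5 r₂ r₃)) t₂)
        = F.map (TypeCat.ofHom (fun t : Rs r₃ => t.val.1)) t₃ := by
      rw [fmap_fmap]
      exact (fmap_congr F (f5_rho5 r₂ r₃) t₂).trans hc
    have E5 : F.map (TypeCat.ofHom (rho5 r₂ r₃)) t₂ = F.map (TypeCat.ofHom (h5 r₂ r₃)) t₃ :=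
      m2 F hF (f5 r₂ r₃) (fun t : Rs r₃ => t.val.1) (h5 r₂ r₃)
        (f5_h5 r₂ r₃) (C5 r₂ r₃) _ t₃ pre5
    have pre6 : F.map (TypeCat.ofHom (f6 r₁ r₂)) (F.map (TypeCat.ofHom (rho6 r₁ r₂)) t₂)
        = F.map (TypeCat.ofHom (fun t : Rs r₁ => t.val.2)) t₁ := by
      rw [fmap_fmap]
      exact (fmap_congr F (f6_rho6 r₁ r₂) t₂).trans hb.symm
    have E6 : F.map (TypeCat.ofHom (rho6 r₁ r₂)) t₂ = F.map (TypeCat.ofHom (h6 r₁ r₂)) t₁ :=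
      m2 F hF (f6 r₁ r₂) (fun t : Rs r₁ => t.val.2) (h6 r₁ r₂)
        (f6_h6 r₁ r₂) (C6 r₁ r₂) _ t₁ pre6
    have P5 : ∀ {V' : Type u} (μ : W5 r₂ r₃ → V'),
        F.map (TypeCat.ofHom (fun q => μ (rho5 r₂ r₃ q))) t₂ = F.map (TypeCat.ofHom (fun t => μ (h5 r₂ r₃ t))) t₃ := by
      intro V' μ
      calc F.map (TypeCat.ofHom (fun q => μ (rho5 r₂ r₃ q))) t₂
          = F.map (TypeCat.ofHom μ) (F.map (TypeCat.ofHom (rho5 r₂ r₃)) t₂) := (fmap_fmap F (rho5 r₂ r₃) μ t₂).symm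
        _ = F.map (TypeCat.ofHom μ) (F.map (TypeCat.ofHom (h5 r₂ r₃)) t₃) := by rw [E5]
        _ = F.map (TypeCat.ofHom (fun t => μ (h5 r₂ r₃ t))) t₃ := fmap_fmap F (h5 r₂ r₃) μ t₃
    have P6 : ∀ {V' : Type u} (μ : W6 r₁ r₂ → V'),
        F.map (TypeCat.ofHom (fun q => μ (rho6 r₁ r₂ q))) t₂ = F.map (TypeCat.ofHom (fun t => μ (h6 r₁ r₂ t))) t₁ := by
      intro V' μ
      calc F.map (TypeCat.ofHom (fun q => μ (rho6 r₁ r₂ q))) t₂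
          = F.map (TypeCat.ofHom μ) (F.map (TypeCat.ofHom (rho6 r₁ r₂)) t₂) := (fmap_fmap F (rho6 r₁ r₂) μ t₂).symm
        _ = F.map (TypeCat.ofHom μ) (F.map (TypeCat.ofHom (h6 r₁ r₂)) t₁) := by rw [E6]
        _ = F.map (TypeCat.ofHom (fun t => μ (h6 r₁ r₂ t))) t₁ := fmap_fmap F (h6 r₁ r₂) μ t₁
    have CM : F.map (TypeCat.ofHom (fun t => lam6 r₁ r₂ r₃ x₀ (h6 r₁ r₂ t))) t₁
        = F.map (TypeCat.ofHom (fun t => lam5 r₁ r₂ r₃ x₀ (h5 r₂ r₃ t))) t₃ :=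
      (P6 (lam6 r₁ r₂ r₃ x₀)).symm.trans
        ((fmap_congr F (lam_eq x₀ hU) t₂).trans (P5 (lam5 r₁ r₂ r₃ x₀)))
    have preZ : F.map (TypeCat.ofHom (fZ r₃)) (F.map (TypeCat.ofHom (rhoZ r₁ r₂ r₃)) t₃)
        = F.map (TypeCat.ofHom (fun q => mu2 r₁ r₂ r₃ x₀ (rho6 r₁ r₂ q))) t₂ := by
      rw [fmap_fmap]
      calc F.map (TypeCat.ofHom (fun t => fZ r₃ (rhoZ r₁ r₂ r₃ t))) t₃
          = F.map (TypeCat.ofHom (fun t => lam5 r₁ r₂ r₃ x₀ (h5 r₂ r₃ t))) t₃ :=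
            fmap_congr F (fZ_rhoZ x₀ hU) t₃
        _ = F.map (TypeCat.ofHom (fun t => lam6 r₁ r₂ r₃ x₀ (h6 r₁ r₂ t))) t₁ := CM.symm
        _ = F.map (TypeCat.ofHom (fun t => mu2 r₁ r₂ r₃ x₀ (h6 r₁ r₂ t))) t₁ :=
            fmap_congr F (fun t => (mu2_h6 r₁ r₂ r₃ x₀ t).symm) t₁
        _ = F.map (TypeCat.ofHom (fun q => mu2 r₁ r₂ r₃ x₀ (rho6 r₁ r₂ q))) t₂ :=
            (P6 (mu2 r₁ r₂ r₃ x₀)).symm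
    have EZ : F.map (TypeCat.ofHom (rhoZ r₁ r₂ r₃)) t₃ = F.map (TypeCat.ofHom (hZ r₁ r₂ r₃ x₀)) t₂ :=
      m2 F hF (fZ r₃) (fun q => mu2 r₁ r₂ r₃ x₀ (rho6 r₁ r₂ q)) (hZ r₁ r₂ r₃ x₀)
        (fZ_hZ x₀) (CZ x₀) _ t₂ preZ
    have PZ : ∀ {V' : Type u} (μ : WZ (Y := Y) r₃ → V'),
        F.map (TypeCat.ofHom (fun t => μ (rhoZ r₁ r₂ r₃ t))) t₃
          = F.map (TypeCat.ofHom (fun q => μ (hZ r₁ r₂ r₃ x₀ q))) t₂ := by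
      intro V' μ
      calc F.map (TypeCat.ofHom (fun t => μ (rhoZ r₁ r₂ r₃ t))) t₃
          = F.map (TypeCat.ofHom μ) (F.map (TypeCat.ofHom (rhoZ r₁ r₂ r₃)) t₃) := (fmap_fmap F (rhoZ r₁ r₂ r₃) μ t₃).symm
        _ = F.map (TypeCat.ofHom μ) (F.map (TypeCat.ofHom (hZ r₁ r₂ r₃ x₀)) t₂) := by rw [EZ]
        _ = F.map (TypeCat.ofHom (fun q => μ (hZ r₁ r₂ r₃ x₀ q))) t₂ := fmap_fmap F (hZ r₁ r₂ r₃ x₀) μ t₂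
    have Beq : F.map (TypeCat.ofHom (fun p : Rs r₃ => p.val.2)) t₃
        = F.map (TypeCat.ofHom (fun t => θv x₀ (lam5 r₁ r₂ r₃ x₀ (h5 r₂ r₃ t)))) t₃ :=
      calc F.map (TypeCat.ofHom (fun p : Rs r₃ => p.val.2)) t₃
          = F.map (TypeCat.ofHom (fun t => muZ r₃ x₀ (rhoZ r₁ r₂ r₃ t))) t₃ :=
            fmap_congr F (fun t => (muZ_rhoZ x₀ t).symm) t₃
        _ = F.map (TypeCat.ofHom (fun q => muZ r₃ x₀ (hZ r₁ r₂ r₃ x₀ q))) t₂ := PZ (muZ r₃ x₀)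
        _ = F.map (TypeCat.ofHom (fun q => muZ' r₃ x₀ (hZ r₁ r₂ r₃ x₀ q))) t₂ :=
            fmap_congr F (muZmuZ'_hZ x₀) t₂
        _ = F.map (TypeCat.ofHom (fun t => muZ' r₃ x₀ (rhoZ r₁ r₂ r₃ t))) t₃ := (PZ (muZ' r₃ x₀)).symm
        _ = F.map (TypeCat.ofHom (fun t => θv x₀ (lam5 r₁ r₂ r₃ x₀ (h5 r₂ r₃ t)))) t₃ :=
            fmap_congr F (muZ'_rhoZ x₀ hU) t₃
    have preY : F.map (TypeCat.ofHom (fY r₁)) (F.map (TypeCat.ofHom (rhoY r₁ r₂ r₃)) t₁)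
        = F.map (TypeCat.ofHom (fun q => mu5 r₁ r₂ r₃ x₀ (rho5 r₂ r₃ q))) t₂ := by
      rw [fmap_fmap]
      calc F.map (TypeCat.ofHom (fun t => fY r₁ (rhoY r₁ r₂ r₃ t))) t₁
          = F.map (TypeCat.ofHom (fun t => lam6 r₁ r₂ r₃ x₀ (h6 r₁ r₂ t))) t₁ :=
            fmap_congr F (fY_rhoY x₀ hU) t₁
        _ = F.map (TypeCat.ofHom (fun t => lam5 r₁ r₂ r₃ x₀ (h5 r₂ r₃ t))) t₃ := CM
        _ = F.map (TypeCat.ofHom (fun t => mu5 r₁ r₂ r₃ x₀ (h5 r₂ r₃ t))) t₃ :=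
            fmap_congr F (fun t => (mu5_h5 r₁ r₂ r₃ x₀ t).symm) t₃
        _ = F.map (TypeCat.ofHom (fun q => mu5 r₁ r₂ r₃ x₀ (rho5 r₂ r₃ q))) t₂ :=
            (P5 (mu5 r₁ r₂ r₃ x₀)).symm
    have EY : F.map (TypeCat.ofHom (rhoY r₁ r₂ r₃)) t₁ = F.map (TypeCat.ofHom (hY r₁ r₂ r₃ x₀)) t₂ :=
      m2 F hF (fY r₁) (fun q => mu5 r₁ r₂ r₃ x₀ (rho5 r₂ r₃ q)) (hY r₁ r₂ r₃ x₀)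
        (fY_hY x₀) (CY x₀) _ t₂ preY
    have PY : ∀ {V' : Type u} (μ : WY (Z := Z) r₁ → V'),
        F.map (TypeCat.ofHom (fun t => μ (rhoY r₁ r₂ r₃ t))) t₁
          = F.map (TypeCat.ofHom (fun q => μ (hY r₁ r₂ r₃ x₀ q))) t₂ := by
      intro V' μ
      calc F.map (TypeCat.ofHom (fun t => μ (rhoY r₁ r₂ r₃ t))) t₁
          = F.map (TypeCat.ofHom μ) (F.map (TypeCat.ofHom (rhoY r₁ r₂ r₃)) t₁) := (fmap_fmap F (rhoY r₁ r₂ r₃) μ t₁).symm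
        _ = F.map (TypeCat.ofHom μ) (F.map (TypeCat.ofHom (hY r₁ r₂ r₃ x₀)) t₂) := by rw [EY]
        _ = F.map (TypeCat.ofHom (fun q => μ (hY r₁ r₂ r₃ x₀ q))) t₂ := fmap_fmap F (hY r₁ r₂ r₃ x₀) μ t₂
    have Aeq : F.map (TypeCat.ofHom (fun p : Rs r₁ => p.val.1)) t₁
        = F.map (TypeCat.ofHom (fun t => θv x₀ (lam6 r₁ r₂ r₃ x₀ (h6 r₁ r₂ t)))) t₁ :=
      calc F.map (TypeCat.ofHom (fun p : Rs r₁ => p.val.1)) t₁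
          = F.map (TypeCat.ofHom (fun t => nuY r₁ x₀ (rhoY r₁ r₂ r₃ t))) t₁ :=
            fmap_congr F (fun t => (nuY_rhoY x₀ t).symm) t₁
        _ = F.map (TypeCat.ofHom (fun q => nuY r₁ x₀ (hY r₁ r₂ r₃ x₀ q))) t₂ := PY (nuY r₁ x₀)
        _ = F.map (TypeCat.ofHom (fun q => nuY' r₁ x₀ (hY r₁ r₂ r₃ x₀ q))) t₂ :=
            fmap_congr F (nuYnuY'_hY x₀) t₂
        _ = F.map (TypeCat.ofHom (fun t => nuY' r₁ x₀ (rhoY r₁ r₂ r₃ t))) t₁ := (PY (nuY' r₁ x₀)).symm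
        _ = F.map (TypeCat.ofHom (fun t => θv x₀ (lam6 r₁ r₂ r₃ x₀ (h6 r₁ r₂ t)))) t₁ :=
            fmap_congr F (nuY'_rhoY x₀ hU) t₁
    calc F.map (TypeCat.ofHom (fun p : Rs r₁ => p.val.1)) t₁
        = F.map (TypeCat.ofHom (fun t => θv x₀ (lam6 r₁ r₂ r₃ x₀ (h6 r₁ r₂ t)))) t₁ := Aeq
      _ = F.map (TypeCat.ofHom (θv x₀)) (F.map (TypeCat.ofHom (fun t => lam6 r₁ r₂ r₃ x₀ (h6 r₁ r₂ t))) t₁) :=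
          (fmap_fmap F (fun t => lam6 r₁ r₂ r₃ x₀ (h6 r₁ r₂ t)) (θv x₀) t₁).symm
      _ = F.map (TypeCat.ofHom (θv x₀)) (F.map (TypeCat.ofHom (fun t => lam5 r₁ r₂ r₃ x₀ (h5 r₂ r₃ t))) t₃) := by rw [CM]
      _ = F.map (TypeCat.ofHom (fun t => θv x₀ (lam5 r₁ r₂ r₃ x₀ (h5 r₂ r₃ t)))) t₃ :=
          fmap_fmap F (fun t => lam5 r₁ r₂ r₃ x₀ (h5 r₂ r₃ t)) (θv x₀) t₃
      _ = F.map (TypeCat.ofHom (fun p : Rs r₃ => p.val.2)) t₃ := Beq.symm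


private lemma barr_graph (F : Type u ⥤ Type u) {A B : Type u} (u : A → B) (a : F.obj A) :
    BarrLift F (graphRel u) a (F.map (TypeCat.ofHom u) a) := by
  refine ⟨F.map (TypeCat.ofHom (fun x : A => (⟨(x, u x), rfl⟩ : {p : A × B // graphRel u p.1 p.2}))) a, ?_, ?_⟩
  · rw [fmap_fmap]
    exact FunctorToTypes.map_id_apply F a
  · rw [fmap_fmap]

private lemma barr_conv (F : Type u ⥤ Type u) {A B : Type u} (u : A → B) (a : F.obj A) :
    BarrLift F (relConv (graphRel u)) (F.map (TypeCat.ofHom u) a) a := by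
  refine ⟨F.map (TypeCat.ofHom (fun x : A =>
      (⟨(u x, x), rfl⟩ : {p : B × A // relConv (graphRel u) p.1 p.2}))) a, ?_, ?_⟩
  · rw [fmap_fmap]
  · rw [fmap_fmap]
    exact FunctorToTypes.map_id_apply F a

end S12


/-- Equivalence of preservation of 1/4-iso pullbacks with the subidentity conditions
on composable triples of relations. -/
theorem stmt12 (F : Type u ⥤ Type u) :
    (Preserves14IsoPullbacks F ↔
      ∀ (X Y Z : Type u) (r₁ : Rel' X Y) (r₂ : Rel' Y Z) (r₃ : Rel' Z X),
        relLe (relComp r₃ (relComp r₂ r₁)) (relId X) →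
        relLe (relComp (BarrLift F r₃) (relComp (BarrLift F r₂) (BarrLift F r₁)))
          (relId (F.obj X))) ∧
    ((∀ (X Y Z : Type u) (r₁ : Rel' X Y) (r₂ : Rel' Y Z) (r₃ : Rel' Z X),
        relLe (relComp r₃ (relComp r₂ r₁)) (relId X) →
        relLe (relComp (BarrLift F r₃) (relComp (BarrLift F r₂) (BarrLift F r₁)))
          (relId (F.obj X))) ↔
      ∀ (X Y Z : Type u) (r₁ : Rel' X Y) (r₂ : Rel' Y Z) (r₃ : Rel' Z X),
        relComp r₃ (relComp r₂ r₁) = relId X →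
        relLe (relComp (BarrLift F r₃) (relComp (BarrLift F r₂) (BarrLift F r₁)))
          (relId (F.obj X))) := by

  constructor
  · constructor
    · -- (i) → (ii)
      intro hF X Y Z r₁ r₂ r₃ hle a a'' hcomp
      obtain ⟨c, ⟨b, ⟨u₁, h11, h12⟩, ⟨u₂, h21, h22⟩⟩, ⟨u₃, h31, h32⟩⟩ := hcomp
      have hU : ∀ x y z x', r₁ x y → r₂ y z → r₃ z x' → x = x' :=
        fun x y z x' hxy hyz hzx => hle x x' ⟨z, ⟨y, hxy, hyz⟩, hzx⟩
      have key := S12.big F hF r₁ r₂ r₃ hU u₁ u₂ u₃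
        (h12.trans h21.symm) (h22.trans h31.symm)
      show a = a''
      rw [← h11, ← h32]
      exact key
    · -- (ii) → (i)
      intro hcond P X Y Z p₁ p₂ f g hbij hpb
      set e : P ≃ Y := Equiv.ofBijective p₂ hbij with he
      have hco : ∀ p, e p = p₂ p := fun p => rfl
      have h2 : ∀ y, p₂ (e.symm y) = y :=
        fun y => (hco (e.symm y)).symm.trans (e.apply_symm_apply y)
      have hfg : ∀ y, f (p₁ (e.symm y)) = g y := by
        intro y
        have h1 := hpb.1 (e.symm y)
        rwa [h2 y] at h1
      have hC : ∀ x y, f x = f (p₁ (e.symm y)) → x = p₁ (e.symm y) := by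
        intro x y hxy
        obtain ⟨p, ⟨hp1, hp2⟩, -⟩ := hpb.2 x y (hxy.trans (hfg y))
        have hpe : e.symm y = p := by
          have h3 : e p = y := (hco p).trans hp2
          rw [← h3, e.symm_apply_apply]
        rw [← hp1, ← hpe]
      have hle : relLe
          (relComp (graphRel (fun y => p₁ (e.symm y)))
            (relComp (relConv (graphRel g)) (graphRel f))) (relId X) := by
        rintro x x' ⟨y, ⟨z, hfz, hgz⟩, hhx⟩
        have hx : x = p₁ (e.symm y) := hC x y (by rw [hfz, ← hgz]; exact (hfg y).symm)
        exact hx.trans hhx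
      have key := hcond X Z Y (graphRel f) (relConv (graphRel g))
        (graphRel (fun y => p₁ (e.symm y))) hle
      constructor
      · intro p
        calc F.map (TypeCat.ofHom f) (F.map (TypeCat.ofHom p₁) p) = F.map (TypeCat.ofHom (fun q => f (p₁ q))) p := S12.fmap_fmap F p₁ f p
          _ = F.map (TypeCat.ofHom (fun q => g (p₂ q))) p := S12.fmap_congr F hpb.1 p
          _ = F.map (TypeCat.ofHom g) (F.map (TypeCat.ofHom p₂) p) := (S12.fmap_fmap F p₂ g p).symm
      · intro a b hab
        have hmem : relComp (BarrLift F (graphRel (fun y => p₁ (e.symm y))))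
            (relComp (BarrLift F (relConv (graphRel g))) (BarrLift F (graphRel f)))
            a (F.map (TypeCat.ofHom (fun y => p₁ (e.symm y))) b) := by
          refine ⟨b, ⟨F.map (TypeCat.ofHom f) a, S12.barr_graph F f a, ?_⟩, S12.barr_graph F _ b⟩
          rw [hab]
          exact S12.barr_conv F g b
        have hxeq : a = F.map (TypeCat.ofHom (fun y => p₁ (e.symm y))) b :=
          key a (F.map (TypeCat.ofHom (fun y => p₁ (e.symm y))) b) hmem
        refine ⟨F.map (TypeCat.ofHom (e.symm : Y → P)) b, ⟨?_, ?_⟩, ?_⟩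
        · rw [hxeq, S12.fmap_fmap F (e.symm : Y → P) p₁ b]
        · calc F.map (TypeCat.ofHom p₂) (F.map (TypeCat.ofHom (e.symm : Y → P)) b)
              = F.map (TypeCat.ofHom (fun y => p₂ (e.symm y))) b := S12.fmap_fmap F (e.symm : Y → P) p₂ b
            _ = F.map (TypeCat.ofHom (fun y => y)) b := S12.fmap_congr F h2 b
            _ = b := FunctorToTypes.map_id_apply F b
        · rintro q ⟨hq1, hq2⟩
          calc q = F.map (TypeCat.ofHom (fun t => t)) q := (FunctorToTypes.map_id_apply F q).symm
            _ = F.map (TypeCat.ofHom (fun t => e.symm (p₂ t))) q :=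
                S12.fmap_congr F (fun t => by rw [← hco t, e.symm_apply_apply]) q
            _ = F.map (TypeCat.ofHom (e.symm : Y → P)) (F.map (TypeCat.ofHom p₂) q) := (S12.fmap_fmap F p₂ (e.symm : Y → P) q).symm
            _ = F.map (TypeCat.ofHom (e.symm : Y → P)) b := by rw [hq2]
  · constructor
    · -- (ii) → (iii)
      intro h2 X Y Z r₁ r₂ r₃ heq
      exact h2 X Y Z r₁ r₂ r₃ (by rw [heq]; exact fun x y h => h)
    · -- (iii) → (ii)
      intro h3 X Y Z r₁ r₂ r₃ hle
      set r₁' : Rel' X (Y ⊕ X) := fun x w =>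
        match w with
        | Sum.inl y => r₁ x y
        | Sum.inr x' => x = x' with hr1'
      set r₂' : Rel' (Y ⊕ X) (Z ⊕ X) := fun w v =>
        match w, v with
        | Sum.inl y, Sum.inl z => r₂ y z
        | Sum.inr x, Sum.inr x' => x = x'
        | _, _ => False with hr2'
      set r₃' : Rel' (Z ⊕ X) X := fun v x' =>
        match v with
        | Sum.inl z => r₃ z x'
        | Sum.inr x => x = x' with hr3'
      have heq : relComp r₃' (relComp r₂' r₁') = relId X := by
        funext x x'
        apply propext
        constructor
        · rintro ⟨v, ⟨w, h1, h2⟩, h3⟩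
          rcases w with y | x₁ <;> rcases v with z | x₂
          · exact hle x x' ⟨z, ⟨y, h1, h2⟩, h3⟩
          · exact absurd h2 (by simp [hr2'])
          · exact absurd h2 (by simp [hr2'])
          · exact (h1.trans h2).trans h3
        · intro h
          exact ⟨Sum.inr x, ⟨Sum.inr x, rfl, rfl⟩, h⟩
      have key := h3 X (Y ⊕ X) (Z ⊕ X) r₁' r₂' r₃' heq
      intro a a'' hcomp
      obtain ⟨c, ⟨b, ⟨u₁, h11, h12⟩, ⟨u₂, h21, h22⟩⟩, ⟨u₃, h31, h32⟩⟩ := hcomp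
      refine key a a'' ⟨F.map (TypeCat.ofHom (Sum.inl : Z → Z ⊕ X)) c,
        ⟨F.map (TypeCat.ofHom (Sum.inl : Y → Y ⊕ X)) b, ?_, ?_⟩, ?_⟩
      · refine ⟨F.map (TypeCat.ofHom (fun p : {p : X × Y // r₁ p.1 p.2} =>
          (⟨(p.val.1, Sum.inl p.val.2), p.prop⟩ : {p : X × (Y ⊕ X) // r₁' p.1 p.2}))) u₁, ?_, ?_⟩
        · rw [S12.fmap_fmap]
          exact h11
        · rw [S12.fmap_fmap, ← h12, S12.fmap_fmap]
      · refine ⟨F.map (TypeCat.ofHom (fun p : {p : Y × Z // r₂ p.1 p.2} =>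
          (⟨(Sum.inl p.val.1, Sum.inl p.val.2), p.prop⟩
            : {p : (Y ⊕ X) × (Z ⊕ X) // r₂' p.1 p.2}))) u₂, ?_, ?_⟩
        · rw [S12.fmap_fmap, ← h21, S12.fmap_fmap]
        · rw [S12.fmap_fmap, ← h22, S12.fmap_fmap]
      · refine ⟨F.map (TypeCat.ofHom (fun p : {p : Z × X // r₃ p.1 p.2} =>
          (⟨(Sum.inl p.val.1, p.val.2), p.prop⟩ : {p : (Z ⊕ X) × X // r₃' p.1 p.2}))) u₃, ?_, ?_⟩
        · rw [S12.fmap_fmap, ← h31, S12.fmap_fmap]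
        · rw [S12.fmap_fmap]
          exact h32
end
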